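/- arXiv:2406.01120 — 11 statements merged into one kernel-verified Lean document; each statement's English description precedes it below -/
import Mathlib

section
/- Let A be a conilpotent Com-PreLie Hopf algebra with antipode S. Then for all a, b in A, S(a • b) = (S(a) • b⁽¹⁾) · S(b⁽²⁾), in Sweedler notation. -/
open TensorProduct Coalgebra


section ConvGeneral
variable {K : Type*} [CommSemiring K] {C : Type*} [AddCommMonoid C] [Module K C]
  {A : Type*} [CommSemiring A] [Algebra K A]

noncomputable def convP (δ : C →ₗ[K] C ⊗[K] C) (f g : C →ₗ[K] A) : C →ₗ[K] A :=
  LinearMap.mul' K A ∘ₗ TensorProduct.map f g ∘ₗ δ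

variable (δ : C →ₗ[K] C ⊗[K] C) (e : C →ₗ[K] K)

theorem convP_assoc
    (hco : (TensorProduct.assoc K C C C).toLinearMap ∘ₗ δ.rTensor C ∘ₗ δ = δ.lTensor C ∘ₗ δ)
    (f g h : C →ₗ[K] A) : convP δ (convP δ f g) h = convP δ f (convP δ g h) := by
  have L1 : TensorProduct.map (LinearMap.mul' K A ∘ₗ TensorProduct.map f g ∘ₗ δ) h
      = (LinearMap.mul' K A).rTensor A ∘ₗ TensorProduct.map (TensorProduct.map f g) h
          ∘ₗ δ.rTensor C := by
    ext x y; simp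
  have L2 : TensorProduct.map f (LinearMap.mul' K A ∘ₗ TensorProduct.map g h ∘ₗ δ)
      = (LinearMap.mul' K A).lTensor A ∘ₗ TensorProduct.map f (TensorProduct.map g h)
          ∘ₗ δ.lTensor C := by
    ext x y; simp
  have E : LinearMap.mul' K A ∘ₗ (LinearMap.mul' K A).lTensor A
        ∘ₗ TensorProduct.map f (TensorProduct.map g h)
        ∘ₗ (TensorProduct.assoc K C C C).toLinearMap
      = LinearMap.mul' K A ∘ₗ (LinearMap.mul' K A).rTensor A
        ∘ₗ TensorProduct.map (TensorProduct.map f g) h := by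
    apply TensorProduct.ext_threefold
    intro x y z
    simp [mul_assoc]
  have E' := congrArg (fun F => F ∘ₗ (δ.rTensor C ∘ₗ δ)) E
  simp only [LinearMap.comp_assoc] at E'
  simp only [convP, L1, L2, LinearMap.comp_assoc]
  rw [← hco]
  exact E'.symm

theorem convP_unit_right
    (hl : e.lTensor C ∘ₗ δ = (TensorProduct.mk K C K).flip 1) (f : C →ₗ[K] A) :
    convP δ f (Algebra.linearMap K A ∘ₗ e) = f := by
  have L : TensorProduct.map f (Algebra.linearMap K A ∘ₗ e)
      = TensorProduct.map f (Algebra.linearMap K A) ∘ₗ e.lTensor C := by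
    ext x y; simp
  simp only [convP, L, LinearMap.comp_assoc, hl]
  ext x
  simp [Algebra.smul_def]

theorem convP_unit_left
    (hr : e.rTensor C ∘ₗ δ = TensorProduct.mk K K C 1) (f : C →ₗ[K] A) :
    convP δ (Algebra.linearMap K A ∘ₗ e) f = f := by
  have L : TensorProduct.map (Algebra.linearMap K A ∘ₗ e) f
      = TensorProduct.map (Algebra.linearMap K A) f ∘ₗ e.rTensor C := by
    ext x y; simp
  simp only [convP, L, LinearMap.comp_assoc, hr]
  ext x
  simp [Algebra.smul_def]

theorem convP_inv_unique
    (hco : (TensorProduct.assoc K C C C).toLinearMap ∘ₗ δ.rTensor C ∘ₗ δ = δ.lTensor C ∘ₗ δ)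
    (hl : e.lTensor C ∘ₗ δ = (TensorProduct.mk K C K).flip 1)
    (hr : e.rTensor C ∘ₗ δ = TensorProduct.mk K K C 1)
    (f g h : C →ₗ[K] A)
    (hfg : convP δ f g = Algebra.linearMap K A ∘ₗ e)
    (hhf : convP δ h f = Algebra.linearMap K A ∘ₗ e) : g = h := by
  calc g = convP δ (Algebra.linearMap K A ∘ₗ e) g := (convP_unit_left δ e hr g).symm
    _ = convP δ (convP δ h f) g := by rw [hhf]
    _ = convP δ h (convP δ f g) := convP_assoc δ hco h f g
    _ = convP δ h (Algebra.linearMap K A ∘ₗ e) := by rw [hfg]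
    _ = h := convP_unit_right δ e hl h

theorem convP_cancel
    (hco : (TensorProduct.assoc K C C C).toLinearMap ∘ₗ δ.rTensor C ∘ₗ δ = δ.lTensor C ∘ₗ δ)
    (hl : e.lTensor C ∘ₗ δ = (TensorProduct.mk K C K).flip 1)
    (hr : e.rTensor C ∘ₗ δ = TensorProduct.mk K K C 1)
    (s i f g : C →ₗ[K] A)
    (hs : convP δ s i = Algebra.linearMap K A ∘ₗ e)
    (hfg : convP δ i f = convP δ i g) : f = g := by
  calc f = convP δ (Algebra.linearMap K A ∘ₗ e) f := (convP_unit_left δ e hr f).symm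
    _ = convP δ (convP δ s i) f := by rw [hs]
    _ = convP δ s (convP δ i f) := convP_assoc δ hco s i f
    _ = convP δ s (convP δ i g) := by rw [hfg]
    _ = convP δ (convP δ s i) g := (convP_assoc δ hco s i g).symm
    _ = convP δ (Algebra.linearMap K A ∘ₗ e) g := by rw [hs]
    _ = g := convP_unit_left δ e hr g
end ConvGeneral

section Two
variable (K : Type*) [Field K] (A : Type*) [CommRing A] [Bialgebra K A]

noncomputable def delta2 : (A ⊗[K] A) →ₗ[K] (A ⊗[K] A) ⊗[K] (A ⊗[K] A) :=
  (tensorTensorTensorComm K A A A A).toLinearMap ∘ₗ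
    TensorProduct.map (comul (R := K)) (comul (R := K))

noncomputable def eps2 : (A ⊗[K] A) →ₗ[K] K :=
  LinearMap.mul' K K ∘ₗ TensorProduct.map (counit (R := K)) (counit (R := K))

theorem delta2_rCounit :
    (eps2 K A).rTensor (A ⊗[K] A) ∘ₗ delta2 K A = TensorProduct.mk K K (A ⊗[K] A) 1 := by
  have step : (eps2 K A).rTensor (A ⊗[K] A) ∘ₗ (tensorTensorTensorComm K A A A A).toLinearMap
      = (LinearMap.mul' K K).rTensor (A ⊗[K] A)
          ∘ₗ (tensorTensorTensorComm K K A K A).toLinearMap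
          ∘ₗ TensorProduct.map ((counit (R := K)).rTensor A) ((counit (R := K)).rTensor A) := by
    ext x1 x2 y1 y2
    simp [eps2]
  calc (eps2 K A).rTensor (A ⊗[K] A) ∘ₗ delta2 K A
      = ((eps2 K A).rTensor (A ⊗[K] A) ∘ₗ (tensorTensorTensorComm K A A A A).toLinearMap)
          ∘ₗ TensorProduct.map (comul (R := K)) (comul (R := K)) := by
        simp only [delta2, LinearMap.comp_assoc]
    _ = (LinearMap.mul' K K).rTensor (A ⊗[K] A)
          ∘ₗ (tensorTensorTensorComm K K A K A).toLinearMap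
          ∘ₗ (TensorProduct.map ((counit (R := K)).rTensor A) ((counit (R := K)).rTensor A)
            ∘ₗ TensorProduct.map (comul (R := K)) (comul (R := K))) := by
        rw [step]; simp only [LinearMap.comp_assoc]
    _ = (LinearMap.mul' K K).rTensor (A ⊗[K] A)
          ∘ₗ (tensorTensorTensorComm K K A K A).toLinearMap
          ∘ₗ TensorProduct.map (TensorProduct.mk K K A 1) (TensorProduct.mk K K A 1) := by
        rw [← TensorProduct.map_comp, Coalgebra.rTensor_counit_comp_comul]
    _ = TensorProduct.mk K K (A ⊗[K] A) 1 := by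
        ext x y; simp

theorem delta2_lCounit :
    (eps2 K A).lTensor (A ⊗[K] A) ∘ₗ delta2 K A = (TensorProduct.mk K (A ⊗[K] A) K).flip 1 := by
  have step : (eps2 K A).lTensor (A ⊗[K] A) ∘ₗ (tensorTensorTensorComm K A A A A).toLinearMap
      = (LinearMap.mul' K K).lTensor (A ⊗[K] A)
          ∘ₗ (tensorTensorTensorComm K A K A K).toLinearMap
          ∘ₗ TensorProduct.map ((counit (R := K)).lTensor A) ((counit (R := K)).lTensor A) := by
    ext x1 x2 y1 y2
    simp [eps2]
  calc (eps2 K A).lTensor (A ⊗[K] A) ∘ₗ delta2 K A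
      = ((eps2 K A).lTensor (A ⊗[K] A) ∘ₗ (tensorTensorTensorComm K A A A A).toLinearMap)
          ∘ₗ TensorProduct.map (comul (R := K)) (comul (R := K)) := by
        simp only [delta2, LinearMap.comp_assoc]
    _ = (LinearMap.mul' K K).lTensor (A ⊗[K] A)
          ∘ₗ (tensorTensorTensorComm K A K A K).toLinearMap
          ∘ₗ (TensorProduct.map ((counit (R := K)).lTensor A) ((counit (R := K)).lTensor A)
            ∘ₗ TensorProduct.map (comul (R := K)) (comul (R := K))) := by
        rw [step]; simp only [LinearMap.comp_assoc]
    _ = (LinearMap.mul' K K).lTensor (A ⊗[K] A)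
          ∘ₗ (tensorTensorTensorComm K A K A K).toLinearMap
          ∘ₗ TensorProduct.map ((TensorProduct.mk K A K).flip 1) ((TensorProduct.mk K A K).flip 1) := by
        rw [← TensorProduct.map_comp, Coalgebra.lTensor_counit_comp_comul]
    _ = (TensorProduct.mk K (A ⊗[K] A) K).flip 1 := by
        ext x y; simp

theorem delta2_coassoc :
    (TensorProduct.assoc K (A ⊗[K] A) (A ⊗[K] A) (A ⊗[K] A)).toLinearMap
        ∘ₗ (delta2 K A).rTensor (A ⊗[K] A) ∘ₗ delta2 K A
      = (delta2 K A).lTensor (A ⊗[K] A) ∘ₗ delta2 K A := by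
  set T := A ⊗[K] A
  set Δ : A →ₗ[K] T := comul (R := K)
  set ttt := (tensorTensorTensorComm K A A A A).toLinearMap
  -- right-hand side
  have claim2 : (delta2 K A).lTensor T ∘ₗ ttt
      = ttt.lTensor T ∘ₗ (tensorTensorTensorComm K A (A ⊗[K] A) A (A ⊗[K] A)).toLinearMap
          ∘ₗ TensorProduct.map (Δ.lTensor A) (Δ.lTensor A) := by
    ext x1 x2 y1 y2
    simp [delta2, ttt, T, Δ]
  have claim1 : (TensorProduct.assoc K T T T).toLinearMap ∘ₗ (delta2 K A).rTensor T ∘ₗ ttt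
      = (TensorProduct.assoc K T T T).toLinearMap ∘ₗ ttt.rTensor T
          ∘ₗ (tensorTensorTensorComm K (A ⊗[K] A) A (A ⊗[K] A) A).toLinearMap
          ∘ₗ TensorProduct.map (Δ.rTensor A) (Δ.rTensor A) := by
    ext x1 x2 y1 y2
    simp [delta2, ttt, T, Δ]
  have fin : (TensorProduct.assoc K T T T).toLinearMap ∘ₗ ttt.rTensor T
        ∘ₗ (tensorTensorTensorComm K (A ⊗[K] A) A (A ⊗[K] A) A).toLinearMap
        ∘ₗ TensorProduct.map (TensorProduct.assoc K A A A).symm.toLinearMap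
            (TensorProduct.assoc K A A A).symm.toLinearMap
      = ttt.lTensor T ∘ₗ (tensorTensorTensorComm K A (A ⊗[K] A) A (A ⊗[K] A)).toLinearMap := by
    ext x1 x2 x3 y1 y2 y3
    simp [ttt, T]
  calc (TensorProduct.assoc K T T T).toLinearMap ∘ₗ (delta2 K A).rTensor T ∘ₗ delta2 K A
      = ((TensorProduct.assoc K T T T).toLinearMap ∘ₗ (delta2 K A).rTensor T ∘ₗ ttt)
          ∘ₗ TensorProduct.map Δ Δ := by
        simp only [delta2, LinearMap.comp_assoc]
        rfl
    _ = (TensorProduct.assoc K T T T).toLinearMap ∘ₗ ttt.rTensor T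
          ∘ₗ (tensorTensorTensorComm K (A ⊗[K] A) A (A ⊗[K] A) A).toLinearMap
          ∘ₗ TensorProduct.map (Δ.rTensor A ∘ₗ Δ) (Δ.rTensor A ∘ₗ Δ) := by
        rw [claim1]; rw [TensorProduct.map_comp]; simp only [LinearMap.comp_assoc]
    _ = (TensorProduct.assoc K T T T).toLinearMap ∘ₗ ttt.rTensor T
          ∘ₗ (tensorTensorTensorComm K (A ⊗[K] A) A (A ⊗[K] A) A).toLinearMap
          ∘ₗ TensorProduct.map
              ((TensorProduct.assoc K A A A).symm.toLinearMap ∘ₗ (Δ.lTensor A ∘ₗ Δ))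
              ((TensorProduct.assoc K A A A).symm.toLinearMap ∘ₗ (Δ.lTensor A ∘ₗ Δ)) := by
        rw [show Δ.rTensor A ∘ₗ Δ
            = (TensorProduct.assoc K A A A).symm.toLinearMap ∘ₗ (Δ.lTensor A ∘ₗ Δ) from
          (Coalgebra.coassoc_symm (R := K) (A := A)).symm]
    _ = (ttt.lTensor T ∘ₗ (tensorTensorTensorComm K A (A ⊗[K] A) A (A ⊗[K] A)).toLinearMap)
          ∘ₗ TensorProduct.map (Δ.lTensor A ∘ₗ Δ) (Δ.lTensor A ∘ₗ Δ) := by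
        rw [← fin]
        rw [TensorProduct.map_comp]
        simp only [LinearMap.comp_assoc]
    _ = (delta2 K A).lTensor T ∘ₗ delta2 K A := by
        rw [TensorProduct.map_comp]
        simp only [← LinearMap.comp_assoc] at claim2 ⊢
        rw [← claim2]
        simp only [delta2, LinearMap.comp_assoc]
        rfl

end Two

section AMul
variable (K : Type*) [Field K] (A : Type*) [CommRing A] [HopfAlgebra K A]

theorem conv2_inv_left :
    convP (delta2 K A) (HopfAlgebra.antipode (R := K) ∘ₗ LinearMap.mul' K A) (LinearMap.mul' K A)
      = Algebra.linearMap K A ∘ₗ eps2 K A := by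
  have F1 : TensorProduct.map (HopfAlgebra.antipode (R := K) (A := A) ∘ₗ LinearMap.mul' K A)
        (LinearMap.mul' K A)
      = (HopfAlgebra.antipode (R := K) (A := A)).rTensor A
          ∘ₗ TensorProduct.map (LinearMap.mul' K A) (LinearMap.mul' K A) := by
    ext x y; simp
  have F2a : TensorProduct.map (LinearMap.mul' K A) (LinearMap.mul' K A)
        ∘ₗ (tensorTensorTensorComm K A A A A).toLinearMap = LinearMap.mul' K (A ⊗[K] A) := by
    ext x1 x2 y1 y2; simp
  have F2b : LinearMap.mul' K (A ⊗[K] A)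
        ∘ₗ TensorProduct.map (comul (R := K)) (comul (R := K))
      = comul (R := K) ∘ₗ LinearMap.mul' K A := by
    ext x y; simp
  have F2 : TensorProduct.map (LinearMap.mul' K A) (LinearMap.mul' K A) ∘ₗ delta2 K A
      = comul (R := K) ∘ₗ LinearMap.mul' K A := by
    calc TensorProduct.map (LinearMap.mul' K A) (LinearMap.mul' K A) ∘ₗ delta2 K A
        = (TensorProduct.map (LinearMap.mul' K A) (LinearMap.mul' K A)
            ∘ₗ (tensorTensorTensorComm K A A A A).toLinearMap)
            ∘ₗ TensorProduct.map (comul (R := K)) (comul (R := K)) := by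
          simp only [delta2, LinearMap.comp_assoc]
      _ = comul (R := K) ∘ₗ LinearMap.mul' K A := by rw [F2a, F2b]
  have Hε : (counit (R := K) (A := A)) ∘ₗ LinearMap.mul' K A = eps2 K A := by
    ext x y; simp [eps2]
  have H := HopfAlgebra.mul_antipode_rTensor_comul (R := K) (A := A)
  simp only [convP]
  rw [F1]
  simp only [LinearMap.comp_assoc]
  rw [F2]
  simp only [← LinearMap.comp_assoc]
  simp only [← LinearMap.comp_assoc] at H
  rw [H]
  simp only [LinearMap.comp_assoc, Hε]

theorem conv2_inv_right :
    convP (delta2 K A) (LinearMap.mul' K A)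
        (LinearMap.mul' K A ∘ₗ TensorProduct.map (HopfAlgebra.antipode (R := K))
          (HopfAlgebra.antipode (R := K)))
      = Algebra.linearMap K A ∘ₗ eps2 K A := by
  have G1 : LinearMap.mul' K A ∘ₗ TensorProduct.map (LinearMap.mul' K A)
        (LinearMap.mul' K A ∘ₗ TensorProduct.map (HopfAlgebra.antipode (R := K))
          (HopfAlgebra.antipode (R := K)))
        ∘ₗ (tensorTensorTensorComm K A A A A).toLinearMap
      = LinearMap.mul' K A ∘ₗ TensorProduct.map
          (LinearMap.mul' K A ∘ₗ (HopfAlgebra.antipode (R := K) (A := A)).lTensor A)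
          (LinearMap.mul' K A ∘ₗ (HopfAlgebra.antipode (R := K) (A := A)).lTensor A) := by
    ext x1 x2 y1 y2
    simp [mul_mul_mul_comm]
  have G2 : LinearMap.mul' K A ∘ₗ TensorProduct.map
        (Algebra.linearMap K A ∘ₗ counit (R := K)) (Algebra.linearMap K A ∘ₗ counit (R := K))
      = Algebra.linearMap K A ∘ₗ eps2 K A := by
    ext x y; simp [eps2]
  have H := HopfAlgebra.mul_antipode_lTensor_comul (R := K) (A := A)
  calc convP (delta2 K A) (LinearMap.mul' K A)
        (LinearMap.mul' K A ∘ₗ TensorProduct.map (HopfAlgebra.antipode (R := K))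
          (HopfAlgebra.antipode (R := K)))
      = (LinearMap.mul' K A ∘ₗ TensorProduct.map (LinearMap.mul' K A)
          (LinearMap.mul' K A ∘ₗ TensorProduct.map (HopfAlgebra.antipode (R := K))
            (HopfAlgebra.antipode (R := K)))
          ∘ₗ (tensorTensorTensorComm K A A A A).toLinearMap)
          ∘ₗ TensorProduct.map (comul (R := K)) (comul (R := K)) := by
        simp only [convP, delta2, LinearMap.comp_assoc]
    _ = LinearMap.mul' K A ∘ₗ TensorProduct.map
          (LinearMap.mul' K A ∘ₗ (HopfAlgebra.antipode (R := K) (A := A)).lTensor A ∘ₗ comul)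
          (LinearMap.mul' K A ∘ₗ (HopfAlgebra.antipode (R := K) (A := A)).lTensor A ∘ₗ comul) := by
        rw [G1]
        simp only [LinearMap.comp_assoc]
        rw [← TensorProduct.map_comp]
        simp only [LinearMap.comp_assoc]
    _ = Algebra.linearMap K A ∘ₗ eps2 K A := by rw [H, G2]

theorem antipode_comp_mul :
    HopfAlgebra.antipode (R := K) (A := A) ∘ₗ LinearMap.mul' K A
      = LinearMap.mul' K A ∘ₗ TensorProduct.map (HopfAlgebra.antipode (R := K))
          (HopfAlgebra.antipode (R := K)) := by
  refine (convP_inv_unique (delta2 K A) (eps2 K A) (delta2_coassoc K A) (delta2_lCounit K A)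
    (delta2_rCounit K A) (LinearMap.mul' K A) _ _ (conv2_inv_right K A) (conv2_inv_left K A)).symm

theorem antipode_mul (x y : A) :
    HopfAlgebra.antipode (R := K) (x * y)
      = HopfAlgebra.antipode (R := K) x * HopfAlgebra.antipode (R := K) y := by
  have := LinearMap.congr_fun (antipode_comp_mul K A) (x ⊗ₜ[K] y)
  simpa using this

end AMul

section MainAux
variable {K : Type*} [Field K] {A : Type*} [CommRing A] [HopfAlgebra K A]

/-- The map `x ↦ (x • b⁽¹⁾) S(b⁽²⁾)`, as a linear map. -/
noncomputable def psiMap (bullet : A →ₗ[K] A →ₗ[K] A) (b : A) : A →ₗ[K] A :=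
  (LinearMap.mul' K A ∘ₗ (HopfAlgebra.antipode (R := K) (A := A)).lTensor A)
    ∘ₗ (LinearMap.applyₗ (comul (R := K) b))
    ∘ₗ (LinearMap.rTensorHom A)
    ∘ₗ bullet

theorem psiMap_apply (bullet : A →ₗ[K] A →ₗ[K] A) (b x : A) :
    psiMap bullet b x = LinearMap.mul' K A
      (TensorProduct.map (bullet x) (HopfAlgebra.antipode (R := K)) (comul b)) := by
  have h : (HopfAlgebra.antipode (R := K) (A := A)).lTensor A ∘ₗ (bullet x).rTensor A
      = TensorProduct.map (bullet x) (HopfAlgebra.antipode (R := K)) := by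
    ext u v; simp
  have := LinearMap.congr_fun h (comul (R := K) b)
  simp only [LinearMap.comp_apply] at this
  simp [psiMap, LinearMap.applyₗ, this]
  exact congrArg (LinearMap.mul' K A) this

theorem counit_mul_counit (x : A) :
    LinearMap.mul' K K (TensorProduct.map (counit (R := K)) (counit (R := K))
      (comul (R := K) x)) = counit (R := K) x := by
  have h2 := Coalgebra.sum_counit_tmul_map_eq (R := K) (counit (R := K) (A := A)) x
    (repr := ℛ K x)
  calc LinearMap.mul' K K (TensorProduct.map (counit (R := K)) (counit (R := K))
        (comul (R := K) x))
      = LinearMap.mul' K K (∑ i ∈ (ℛ K x).index,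
          counit (R := K) ((ℛ K x).left i) ⊗ₜ[K] counit (R := K) ((ℛ K x).right i)) := by
        rw [← (ℛ K x).eq]; simp
    _ = LinearMap.mul' K K ((1 : K) ⊗ₜ[K] counit (R := K) x) := by rw [h2]
    _ = counit (R := K) x := by simp

theorem counit_bullet (bullet : A →ₗ[K] A →ₗ[K] A)
    (compat : ∀ a b : A, comul (R := K) (bullet a b)
      = TensorProduct.map LinearMap.id (bullet.flip b) (comul a)
        + (TensorProduct.map (TensorProduct.lift bullet) (LinearMap.mul' K A))
            (TensorProduct.tensorTensorTensorComm K A A A A (comul a ⊗ₜ[K] comul b)))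
    (a b : A) : counit (R := K) (bullet a b) = 0 := by
  set ε : A →ₗ[K] K := counit (R := K)
  -- term 1
  have P2 : LinearMap.mul' K K (TensorProduct.map ε ε
      (TensorProduct.map LinearMap.id (bullet.flip b) (comul (R := K) a)))
      = ε (bullet a b) := by
    have h2 := Coalgebra.sum_counit_tmul_map_eq (R := K) (ε ∘ₗ bullet.flip b) a
      (repr := ℛ K a)
    have h3 := congrArg (LinearMap.mul' K K) h2
    simp only [map_sum, LinearMap.mul'_apply, LinearMap.comp_apply] at h3
    rw [← (ℛ K a).eq]
    simpa using h3
  -- term 2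
  have c : A ⊗[K] A →ₗ[K] A := (TensorProduct.rid K A).toLinearMap ∘ₗ ε.lTensor A
  have hc : ∀ x : A, (TensorProduct.rid K A) ((ε.lTensor A) (comul (R := K) x)) = x := by
    intro x
    simp [ε]
  have CL : LinearMap.mul' K K ∘ₗ TensorProduct.map ε ε
        ∘ₗ TensorProduct.map (TensorProduct.lift bullet) (LinearMap.mul' K A)
        ∘ₗ (tensorTensorTensorComm K A A A A).toLinearMap
      = (ε ∘ₗ TensorProduct.lift bullet) ∘ₗ TensorProduct.map
          ((TensorProduct.rid K A).toLinearMap ∘ₗ ε.lTensor A)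
          ((TensorProduct.rid K A).toLinearMap ∘ₗ ε.lTensor A) := by
    ext x1 x2 y1 y2
    simp [ε, mul_comm, mul_assoc, mul_left_comm]
  have P3 : LinearMap.mul' K K (TensorProduct.map ε ε
      ((TensorProduct.map (TensorProduct.lift bullet) (LinearMap.mul' K A))
        (TensorProduct.tensorTensorTensorComm K A A A A
          (comul (R := K) a ⊗ₜ[K] comul (R := K) b))))
      = ε (bullet a b) := by
    have h4 := LinearMap.congr_fun CL ((comul (R := K) a) ⊗ₜ[K] (comul (R := K) b))
    simp only [LinearMap.comp_apply, TensorProduct.map_tmul, LinearEquiv.coe_coe] at h4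
    rw [h4, hc a, hc b]
    simp
  have hcp := congrArg (fun t => LinearMap.mul' K K (TensorProduct.map ε ε t)) (compat a b)
  simp only [map_add] at hcp
  rw [counit_mul_counit (bullet a b)] at hcp
  rw [P2, P3] at hcp
  exact left_eq_add.mp hcp

end MainAux

theorem antipode_bullet'
    (K : Type*) [Field K]
    (A : Type*) [CommRing A] [HopfAlgebra K A]
    (bullet : A →ₗ[K] A →ₗ[K] A)
    (leibniz : ∀ a b c : A, bullet (a * b) c = bullet a c * b + a * bullet b c)
    (compat : ∀ a b : A, comul (R := K) (bullet a b)
      = TensorProduct.map LinearMap.id (bullet.flip b) (comul a)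
        + (TensorProduct.map (TensorProduct.lift bullet) (LinearMap.mul' K A))
            (TensorProduct.tensorTensorTensorComm K A A A A (comul a ⊗ₜ[K] comul b)))
    (a b : A) :
    HopfAlgebra.antipode (R := K) (bullet a b)
      = LinearMap.mul' K A
          (TensorProduct.map (bullet (HopfAlgebra.antipode (R := K) a))
            (HopfAlgebra.antipode (R := K)) (comul b)) := by
  classical
  have bullet_one : ∀ c : A, bullet 1 c = 0 := by
    intro c
    have h := leibniz 1 1 c
    simp only [one_mul, mul_one] at h
    exact left_eq_add.mp h
  have key : ∀ x : A,
      convP (comul (R := K)) LinearMap.id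
          (HopfAlgebra.antipode (R := K) (A := A) ∘ₗ bullet.flip b) x
        = convP (comul (R := K)) LinearMap.id
          (psiMap bullet b ∘ₗ HopfAlgebra.antipode (R := K) (A := A)) x := by
    intro x
    set ra := ℛ K x with hra
    set rb := ℛ K b with hrb
    have expandL : convP (comul (R := K)) LinearMap.id
        (HopfAlgebra.antipode (R := K) (A := A) ∘ₗ bullet.flip b) x
        = ∑ i ∈ ra.index, ra.left i * HopfAlgebra.antipode (R := K) (bullet (ra.right i) b) := by
      simp only [convP, LinearMap.comp_apply]
      rw [← ra.eq]
      simp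
    have expandR : convP (comul (R := K)) LinearMap.id
        (psiMap bullet b ∘ₗ HopfAlgebra.antipode (R := K) (A := A)) x
        = ∑ i ∈ ra.index, ∑ j ∈ rb.index,
            ra.left i * (bullet (HopfAlgebra.antipode (R := K) (ra.right i)) (rb.left j)
              * HopfAlgebra.antipode (R := K) (rb.right j)) := by
      simp only [convP, LinearMap.comp_apply]
      rw [← ra.eq]
      simp only [map_sum, TensorProduct.map_tmul, LinearMap.mul'_apply, LinearMap.id_coe,
        id_eq, LinearMap.comp_apply, Finset.mul_sum]
      refine Finset.sum_congr rfl fun i _ => ?_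
      rw [psiMap_apply, ← rb.eq]
      simp [Finset.mul_sum]
    -- step 2
    have step2 : (0 : A)
        = (∑ i ∈ ra.index, ra.left i * HopfAlgebra.antipode (R := K) (bullet (ra.right i) b))
          + ∑ i ∈ ra.index, ∑ j ∈ rb.index,
              bullet (ra.left i) (rb.left j)
                * HopfAlgebra.antipode (R := K) (ra.right i * rb.right j) := by
      have hc := compat x b
      rw [← ra.eq, ← rb.eq] at hc
      have h0 := congrArg (fun t => LinearMap.mul' K A
        ((HopfAlgebra.antipode (R := K) (A := A)).lTensor A t)) hc
      simp only [HopfAlgebra.mul_antipode_lTensor_comul_apply,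
        counit_bullet bullet compat, map_zero, map_add, map_sum, TensorProduct.sum_tmul,
        TensorProduct.tmul_sum, TensorProduct.map_tmul, tensorTensorTensorComm_tmul,
        LinearMap.lTensor_tmul, LinearMap.mul'_apply, LinearMap.id_coe, id_eq,
        TensorProduct.lift.tmul, LinearMap.flip_apply] at h0
      rw [Finset.sum_comm (s := rb.index) (t := ra.index)] at h0
      exact h0
    -- step 3
    have step3 : (∑ i ∈ ra.index, ∑ j ∈ rb.index,
          ra.left i * (bullet (HopfAlgebra.antipode (R := K) (ra.right i)) (rb.left j)
            * HopfAlgebra.antipode (R := K) (rb.right j)))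
        + (∑ i ∈ ra.index, ∑ j ∈ rb.index,
            bullet (ra.left i) (rb.left j)
              * HopfAlgebra.antipode (R := K) (ra.right i * rb.right j)) = 0 := by
      calc (∑ i ∈ ra.index, ∑ j ∈ rb.index,
            ra.left i * (bullet (HopfAlgebra.antipode (R := K) (ra.right i)) (rb.left j)
              * HopfAlgebra.antipode (R := K) (rb.right j)))
          + (∑ i ∈ ra.index, ∑ j ∈ rb.index,
              bullet (ra.left i) (rb.left j)
                * HopfAlgebra.antipode (R := K) (ra.right i * rb.right j))
          = ∑ i ∈ ra.index, ∑ j ∈ rb.index,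
              bullet (ra.left i * HopfAlgebra.antipode (R := K) (ra.right i)) (rb.left j)
                * HopfAlgebra.antipode (R := K) (rb.right j) := by
            rw [← Finset.sum_add_distrib]
            refine Finset.sum_congr rfl fun i _ => ?_
            rw [← Finset.sum_add_distrib]
            refine Finset.sum_congr rfl fun j _ => ?_
            rw [antipode_mul K A, leibniz]
            ring
        _ = ∑ j ∈ rb.index,
              bullet (∑ i ∈ ra.index, ra.left i * HopfAlgebra.antipode (R := K) (ra.right i))
                (rb.left j) * HopfAlgebra.antipode (R := K) (rb.right j) := by
            rw [Finset.sum_comm]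
            refine Finset.sum_congr rfl fun j _ => ?_
            rw [map_sum bullet, LinearMap.coe_sum, Finset.sum_apply, ← Finset.sum_mul]
        _ = 0 := by
            rw [HopfAlgebra.sum_mul_antipode_eq_algebraMap_counit ra]
            simp [Algebra.algebraMap_eq_smul_one, bullet_one]
    rw [expandL, expandR, eq_neg_of_add_eq_zero_left step2.symm,
      eq_neg_of_add_eq_zero_left step3]
  have keyext := LinearMap.ext key
  have hSleft : convP (comul (R := K)) (HopfAlgebra.antipode (R := K) (A := A)) LinearMap.id
      = Algebra.linearMap K A ∘ₗ counit (R := K) :=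
    HopfAlgebra.mul_antipode_rTensor_comul
  have hcancel := convP_cancel (comul (R := K)) (counit (R := K)) Coalgebra.coassoc
    Coalgebra.lTensor_counit_comp_comul Coalgebra.rTensor_counit_comp_comul
    (HopfAlgebra.antipode (R := K) (A := A)) LinearMap.id _ _ hSleft keyext
  have hfin := LinearMap.congr_fun hcancel a
  simp only [LinearMap.comp_apply, LinearMap.flip_apply] at hfin
  rw [psiMap_apply] at hfin
  exact hfin


variable (K : Type*) [Field K] (A : Type*) [CommRing A] [Bialgebra K A]

/-- The reduced coproduct `Δ̃ a = Δ a - a ⊗ 1 - 1 ⊗ a`. -/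
noncomputable def reducedComul : A →ₗ[K] A ⊗[K] A :=
  comul - (TensorProduct.mk K A A).flip 1 - TensorProduct.mk K A A 1

/-- The filtration of `A` by the kernels of the iterated reduced coproducts:
`F 0 = 0` and `F (n+1) = Δ̃⁻¹ (F n ⊗ A)`, so that `F n = ker Δ̃⁽ⁿ⁾`. -/
noncomputable def redFilt : ℕ → Submodule K A
  | 0 => ⊥
  | n + 1 => Submodule.comap (reducedComul K A)
      (LinearMap.range (((redFilt n).subtype).rTensor A))

/-- `A` is conilpotent if every element of the augmentation ideal is killed by some
iterate of the reduced coproduct. -/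
def IsConilpotent : Prop :=
  ∀ a : A, counit (R := K) a = 0 → ∃ n : ℕ, 1 ≤ n ∧ a ∈ redFilt K A n

/-- In a conilpotent Com-PreLie Hopf algebra, `S (a • b) = (S a • b⁽¹⁾) ⬝ S b⁽²⁾`
in Sweedler's notation. -/
theorem antipode_bullet
    (K : Type*) [Field K] [CharZero K]
    (A : Type*) [CommRing A] [HopfAlgebra K A]
    (bullet : A →ₗ[K] A →ₗ[K] A)
    (prelie : ∀ a b c : A, bullet (bullet a b) c - bullet a (bullet b c)
      = bullet (bullet a c) b - bullet a (bullet c b))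
    (leibniz : ∀ a b c : A, bullet (a * b) c = bullet a c * b + a * bullet b c)
    (compat : ∀ a b : A, comul (R := K) (bullet a b)
      = TensorProduct.map LinearMap.id (bullet.flip b) (comul a)
        + (TensorProduct.map (TensorProduct.lift bullet) (LinearMap.mul' K A))
            (TensorProduct.tensorTensorTensorComm K A A A A (comul a ⊗ₜ[K] comul b)))
    (conil : IsConilpotent K A)
    (a b : A) :
    HopfAlgebra.antipode (R := K) (bullet a b)
      = LinearMap.mul' K A
          (TensorProduct.map (bullet (HopfAlgebra.antipode (R := K) a))
            (HopfAlgebra.antipode (R := K)) (comul b)) := by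
  exact antipode_bullet' K A bullet leibniz compat a b
end

section
/- Let A be a conilpotent Com-PreLie Hopf algebra with antipode S. Then for every a in A, S(a • 1) = S(a) • 1. -/
open TensorProduct Coalgebra

variable (K : Type*) [Field K] (A : Type*) [CommRing A] [Bialgebra K A]

namespace ABOaux
variable {K : Type*} [Field K] {A : Type*} [CommRing A] [Bialgebra K A]

/-- Convolution product on `A →ₗ[K] A`. -/
noncomputable def cv (f g : A →ₗ[K] A) : A →ₗ[K] A :=
  LinearMap.mul' K A ∘ₗ TensorProduct.map f g ∘ₗ comul

/-- Convolution unit. -/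
noncomputable def ce : A →ₗ[K] A := Algebra.linearMap K A ∘ₗ counit

lemma cv_assoc (f g h : A →ₗ[K] A) : cv (cv f g) h = cv f (cv g h) := by
  unfold cv
  have h1 : TensorProduct.map (LinearMap.mul' K A ∘ₗ TensorProduct.map f g ∘ₗ comul) h
      = TensorProduct.map (LinearMap.mul' K A) h ∘ₗ
        LinearMap.rTensor A (TensorProduct.map f g) ∘ₗ LinearMap.rTensor A comul := by
    rw [LinearMap.rTensor, LinearMap.rTensor, ← TensorProduct.map_comp,
      ← TensorProduct.map_comp]
    simp
  have h2 : TensorProduct.map f (LinearMap.mul' K A ∘ₗ TensorProduct.map g h ∘ₗ comul)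
      = TensorProduct.map f (LinearMap.mul' K A) ∘ₗ
        LinearMap.lTensor A (TensorProduct.map g h) ∘ₗ LinearMap.lTensor A comul := by
    rw [LinearMap.lTensor, LinearMap.lTensor, ← TensorProduct.map_comp,
      ← TensorProduct.map_comp]
    simp
  rw [h1, h2]
  have coas : (LinearMap.rTensor A comul) ∘ₗ comul
      = (TensorProduct.assoc K A A A).symm.toLinearMap ∘ₗ (LinearMap.lTensor A comul) ∘ₗ comul := by
    rw [coassoc_symm]
  have key : (LinearMap.mul' K A ∘ₗ TensorProduct.map (LinearMap.mul' K A) h ∘ₗ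
        LinearMap.rTensor A (TensorProduct.map f g)) ∘ₗ
        (TensorProduct.assoc K A A A).symm.toLinearMap
      = LinearMap.mul' K A ∘ₗ TensorProduct.map f (LinearMap.mul' K A) ∘ₗ
        LinearMap.lTensor A (TensorProduct.map g h) := by
    apply TensorProduct.ext
    apply LinearMap.ext; intro x
    apply TensorProduct.ext'
    intro y z
    simp [mul_assoc]
  calc LinearMap.mul' K A ∘ₗ (TensorProduct.map (LinearMap.mul' K A) h ∘ₗ
        LinearMap.rTensor A (TensorProduct.map f g) ∘ₗ LinearMap.rTensor A comul) ∘ₗ comul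
      = (LinearMap.mul' K A ∘ₗ TensorProduct.map (LinearMap.mul' K A) h ∘ₗ
        LinearMap.rTensor A (TensorProduct.map f g)) ∘ₗ (LinearMap.rTensor A comul ∘ₗ comul) := by
        simp only [LinearMap.comp_assoc]
    _ = ((LinearMap.mul' K A ∘ₗ TensorProduct.map (LinearMap.mul' K A) h ∘ₗ
        LinearMap.rTensor A (TensorProduct.map f g)) ∘ₗ
        (TensorProduct.assoc K A A A).symm.toLinearMap) ∘ₗ
        ((LinearMap.lTensor A comul) ∘ₗ comul) := by
        rw [coas]; simp only [LinearMap.comp_assoc]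
    _ = LinearMap.mul' K A ∘ₗ (TensorProduct.map f (LinearMap.mul' K A) ∘ₗ
        LinearMap.lTensor A (TensorProduct.map g h) ∘ₗ LinearMap.lTensor A comul) ∘ₗ comul := by
        rw [key]; simp only [LinearMap.comp_assoc]

lemma cv_e_right (f : A →ₗ[K] A) : cv f ce = f := by
  unfold cv ce
  have h1 : LinearMap.mul' K A ∘ₗ TensorProduct.map f (Algebra.linearMap K A ∘ₗ counit)
      = f ∘ₗ (TensorProduct.rid K A).toLinearMap ∘ₗ LinearMap.lTensor A (counit (R := K) (A := A)) := by
    apply TensorProduct.ext'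
    intro x y
    simp only [LinearMap.coe_comp, Function.comp_apply, TensorProduct.map_tmul,
      LinearMap.mul'_apply, LinearMap.lTensor_tmul, LinearMap.rTensor_tmul,
      LinearEquiv.coe_coe, TensorProduct.rid_tmul, TensorProduct.lid_tmul,
      Algebra.linearMap_apply, map_smul]
    rw [Algebra.smul_def]
    try ring
  rw [← LinearMap.comp_assoc, h1]
  apply LinearMap.ext; intro a
  simp

lemma cv_e_left (f : A →ₗ[K] A) : cv ce f = f := by
  unfold cv ce
  have h1 : LinearMap.mul' K A ∘ₗ TensorProduct.map (Algebra.linearMap K A ∘ₗ counit) f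
      = f ∘ₗ (TensorProduct.lid K A).toLinearMap ∘ₗ LinearMap.rTensor A (counit (R := K) (A := A)) := by
    apply TensorProduct.ext'
    intro x y
    simp only [LinearMap.coe_comp, Function.comp_apply, TensorProduct.map_tmul,
      LinearMap.mul'_apply, LinearMap.lTensor_tmul, LinearMap.rTensor_tmul,
      LinearEquiv.coe_coe, TensorProduct.rid_tmul, TensorProduct.lid_tmul,
      Algebra.linearMap_apply, map_smul]
    rw [Algebra.smul_def]
    try ring
  rw [← LinearMap.comp_assoc, h1]
  apply LinearMap.ext; intro a
  simp

lemma cv_add_left (f f' g : A →ₗ[K] A) : cv (f + f') g = cv f g + cv f' g := by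
  unfold cv
  rw [TensorProduct.map_add_left]
  simp [LinearMap.comp_add, LinearMap.add_comp]

lemma cv_add_right (f g g' : A →ₗ[K] A) : cv f (g + g') = cv f g + cv f g' := by
  unfold cv
  rw [TensorProduct.map_add_right]
  simp [LinearMap.comp_add, LinearMap.add_comp]

lemma cv_zero_left (g : A →ₗ[K] A) : cv 0 g = 0 := by
  have := cv_add_left (0 : A →ₗ[K] A) 0 g
  simpa using this.symm

lemma cv_zero_right (f : A →ₗ[K] A) : cv f 0 = 0 := by
  have := cv_add_right f (0 : A →ₗ[K] A) 0
  simpa using this.symm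

lemma cv_neg_left (f g : A →ₗ[K] A) : cv (-f) g = -(cv f g) := by
  have h : cv f g + cv (-f) g = 0 := by
    rw [← cv_add_left, add_neg_cancel, cv_zero_left]
  exact eq_neg_of_add_eq_zero_right h

lemma cv_neg_right (f g : A →ₗ[K] A) : cv f (-g) = -(cv f g) := by
  have h : cv f g + cv f (-g) = 0 := by
    rw [← cv_add_right, add_neg_cancel, cv_zero_right]
  exact eq_neg_of_add_eq_zero_right h

end ABOaux

open ABOaux in
/-- In a conilpotent Com-PreLie Hopf algebra, `S (a • 1) = S a • 1`. -/
theorem antipode_bullet_one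
    (K : Type*) [Field K] [CharZero K]
    (A : Type*) [CommRing A] [HopfAlgebra K A]
    (bullet : A →ₗ[K] A →ₗ[K] A)
    (prelie : ∀ a b c : A, bullet (bullet a b) c - bullet a (bullet b c)
      = bullet (bullet a c) b - bullet a (bullet c b))
    (leibniz : ∀ a b c : A, bullet (a * b) c = bullet a c * b + a * bullet b c)
    (compat : ∀ a b : A, comul (R := K) (bullet a b)
      = TensorProduct.map LinearMap.id (bullet.flip b) (comul a)
        + (TensorProduct.map (TensorProduct.lift bullet) (LinearMap.mul' K A))
            (TensorProduct.tensorTensorTensorComm K A A A A (comul a ⊗ₜ[K] comul b)))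
    (conil : IsConilpotent K A)
    (a : A) :
    HopfAlgebra.antipode (R := K) (bullet a 1)
      = bullet (HopfAlgebra.antipode (R := K) a) 1 := by
  set S : A →ₗ[K] A := HopfAlgebra.antipode (R := K) with hS
  set D : A →ₗ[K] A := bullet.flip 1 with hDdef
  have hD : ∀ x : A, D x = bullet x 1 := fun x => rfl
  -- D 1 = 0
  have D_one : D 1 = 0 := by
    have h := leibniz 1 1 1
    rw [one_mul, mul_one, one_mul] at h
    have : bullet 1 1 = 0 := right_eq_add.mp h
    simpa [hD] using this
  -- coderivation property
  have coderiv : comul (R := K) ∘ₗ D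
      = LinearMap.rTensor A D ∘ₗ comul + LinearMap.lTensor A D ∘ₗ comul := by
    apply LinearMap.ext; intro x
    have hc := compat x 1
    have h1 : (comul (R := K) (1 : A)) = (1 : A) ⊗ₜ[K] (1 : A) := by
      rw [Bialgebra.comul_one]; rfl
    rw [h1] at hc
    have h2 : ∀ z : A ⊗[K] A,
        (TensorProduct.map (TensorProduct.lift bullet) (LinearMap.mul' K A))
          (TensorProduct.tensorTensorTensorComm K A A A A (z ⊗ₜ[K] ((1:A) ⊗ₜ[K] (1:A))))
        = LinearMap.rTensor A D z := by
      intro z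
      induction z using TensorProduct.induction_on with
      | zero =>
        rw [TensorProduct.zero_tmul, LinearEquiv.map_zero, LinearMap.map_zero,
          LinearMap.map_zero]
      | tmul x y => simp [hD]
      | add u v hu hv =>
        rw [TensorProduct.add_tmul, map_add, map_add, hu, hv, map_add]
    simp only [LinearMap.coe_comp, Function.comp_apply, LinearMap.add_apply]
    rw [hD, hc, h2]
    have h3 : TensorProduct.map LinearMap.id (bullet.flip 1) = LinearMap.lTensor A D := rfl
    rw [h3, add_comm]
  -- counit kills D
  have counit_D : (counit (R := K) (A := A)) ∘ₗ D = 0 := by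
    apply LinearMap.ext; intro x
    have hψ : ∀ z : A ⊗[K] A, LinearMap.mul' K K
        (TensorProduct.map (counit (R := K)) (counit (R := K)) z)
        = counit (R := K) ((TensorProduct.lid K A) (LinearMap.rTensor A (counit (R := K)) z)) := by
      intro z
      induction z using TensorProduct.induction_on with
      | zero => simp
      | tmul u v => simp [smul_eq_mul]
      | add u v hu hv => simp [hu, hv]
    have hχ1 : ∀ z : A ⊗[K] A, LinearMap.mul' K K
        (TensorProduct.map (counit (R := K)) (counit (R := K)) (LinearMap.rTensor A D z))
        = counit (R := K) (D ((TensorProduct.rid K A) (LinearMap.lTensor A (counit (R := K)) z))) := by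
      intro z
      induction z using TensorProduct.induction_on with
      | zero => simp
      | tmul u v => simp [smul_eq_mul, mul_comm]
      | add u v hu hv => simp only [map_add, hu, hv]
    have hχ2 : ∀ z : A ⊗[K] A, LinearMap.mul' K K
        (TensorProduct.map (counit (R := K)) (counit (R := K)) (LinearMap.lTensor A D z))
        = counit (R := K) (D ((TensorProduct.lid K A) (LinearMap.rTensor A (counit (R := K)) z))) := by
      intro z
      induction z using TensorProduct.induction_on with
      | zero => simp
      | tmul u v => simp [smul_eq_mul]
      | add u v hu hv => simp only [map_add, hu, hv]
    have hcod := LinearMap.congr_fun coderiv x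
    simp only [LinearMap.coe_comp, Function.comp_apply, LinearMap.add_apply] at hcod
    have e1 : LinearMap.mul' K K
        (TensorProduct.map (counit (R := K)) (counit (R := K)) (comul (R := K) (D x)))
        = counit (R := K) (D x) := by
      rw [hψ, Coalgebra.rTensor_counit_comul]
      simp
    have e2 := congrArg (fun z => LinearMap.mul' K K
        (TensorProduct.map (counit (R := K)) (counit (R := K)) z)) hcod
    simp only [map_add] at e2
    rw [e1, hχ1, hχ2, Coalgebra.lTensor_counit_comul, Coalgebra.rTensor_counit_comul] at e2
    simp only [TensorProduct.rid_tmul, TensorProduct.lid_tmul, one_smul] at e2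
    have : counit (R := K) (D x) = 0 := right_eq_add.mp e2
    simpa using this
  -- derivation property on multiplication
  have D_mul : D ∘ₗ LinearMap.mul' K A
      = LinearMap.mul' K A ∘ₗ (LinearMap.rTensor A D + LinearMap.lTensor A D) := by
    apply TensorProduct.ext'
    intro x y
    simp only [LinearMap.coe_comp, Function.comp_apply, LinearMap.mul'_apply,
      LinearMap.add_apply, LinearMap.rTensor_tmul, LinearMap.lTensor_tmul, map_add]
    rw [hD, leibniz x y 1, ← hD, ← hD]
  -- D kills the convolution unit
  have D_e : D ∘ₗ (ce : A →ₗ[K] A) = 0 := by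
    apply LinearMap.ext; intro x
    simp only [ce, LinearMap.coe_comp, Function.comp_apply, Algebra.linearMap_apply,
      LinearMap.zero_apply]
    rw [Algebra.algebraMap_eq_smul_one, map_smul, D_one, smul_zero]
  -- antipode axioms in convolution form
  have cvSid : cv S LinearMap.id = (ce : A →ₗ[K] A) := by
    have := HopfAlgebra.mul_antipode_rTensor_comul (R := K) (A := A)
    rw [LinearMap.rTensor] at this
    exact this
  have cvidS : cv LinearMap.id S = (ce : A →ₗ[K] A) := by
    have := HopfAlgebra.mul_antipode_lTensor_comul (R := K) (A := A)
    rw [LinearMap.lTensor] at this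
    exact this
  -- Lemma A : cv (S ∘ D) id + cv S D = 0
  have lemA : cv (S ∘ₗ D) LinearMap.id + cv S D = 0 := by
    have hmap : TensorProduct.map (S ∘ₗ D) LinearMap.id + TensorProduct.map S D
        = TensorProduct.map S LinearMap.id ∘ₗ (LinearMap.rTensor A D + LinearMap.lTensor A D) := by
      rw [LinearMap.comp_add, LinearMap.rTensor, LinearMap.lTensor,
        ← TensorProduct.map_comp, ← TensorProduct.map_comp]
      simp
    have step1 : cv (S ∘ₗ D) LinearMap.id + cv S D
        = LinearMap.mul' K A ∘ₗ (TensorProduct.map (S ∘ₗ D) LinearMap.id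
            + TensorProduct.map S D) ∘ₗ comul := by
      unfold cv
      rw [LinearMap.add_comp, LinearMap.comp_add]
    have hco : (LinearMap.rTensor A D + LinearMap.lTensor A D) ∘ₗ comul
        = comul (R := K) ∘ₗ D := coderiv.symm
    calc cv (S ∘ₗ D) LinearMap.id + cv S D
        = LinearMap.mul' K A ∘ₗ (TensorProduct.map S LinearMap.id ∘ₗ
            (LinearMap.rTensor A D + LinearMap.lTensor A D)) ∘ₗ comul := by
          rw [step1, hmap]
      _ = (LinearMap.mul' K A ∘ₗ TensorProduct.map S LinearMap.id ∘ₗ comul) ∘ₗ D := by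
          simp only [LinearMap.comp_assoc, hco]
      _ = (ce : A →ₗ[K] A) ∘ₗ D := by rw [← cvSid]; rfl
      _ = Algebra.linearMap K A ∘ₗ ((counit (R := K) (A := A)) ∘ₗ D) := by
          unfold ce; rw [LinearMap.comp_assoc]
      _ = 0 := by rw [counit_D, LinearMap.comp_zero]
  -- Lemma B : cv D S + cv id (D ∘ S) = 0
  have lemB : cv D S + cv LinearMap.id (D ∘ₗ S) = 0 := by
    have hmap : TensorProduct.map D S + TensorProduct.map LinearMap.id (D ∘ₗ S)
        = (LinearMap.rTensor A D + LinearMap.lTensor A D) ∘ₗ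
            TensorProduct.map LinearMap.id S := by
      rw [LinearMap.add_comp, LinearMap.rTensor, LinearMap.lTensor,
        ← TensorProduct.map_comp, ← TensorProduct.map_comp]
      simp
    have step1 : cv D S + cv LinearMap.id (D ∘ₗ S)
        = LinearMap.mul' K A ∘ₗ (TensorProduct.map D S
            + TensorProduct.map LinearMap.id (D ∘ₗ S)) ∘ₗ comul := by
      unfold cv
      rw [LinearMap.add_comp, LinearMap.comp_add]
    calc cv D S + cv LinearMap.id (D ∘ₗ S)
        = LinearMap.mul' K A ∘ₗ ((LinearMap.rTensor A D + LinearMap.lTensor A D) ∘ₗ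
            TensorProduct.map LinearMap.id S) ∘ₗ comul := by rw [step1, hmap]
      _ = (LinearMap.mul' K A ∘ₗ (LinearMap.rTensor A D + LinearMap.lTensor A D)) ∘ₗ
            TensorProduct.map LinearMap.id S ∘ₗ comul := by
          simp only [LinearMap.comp_assoc]
      _ = (D ∘ₗ LinearMap.mul' K A) ∘ₗ TensorProduct.map LinearMap.id S ∘ₗ comul := by
          rw [← D_mul]
      _ = D ∘ₗ cv LinearMap.id S := by unfold cv; simp only [LinearMap.comp_assoc]
      _ = D ∘ₗ (ce : A →ₗ[K] A) := by rw [cvidS]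
      _ = 0 := D_e
  -- conclude
  have hA : cv (S ∘ₗ D) LinearMap.id = -(cv S D) := eq_neg_of_add_eq_zero_left lemA
  have hB : cv LinearMap.id (D ∘ₗ S) = -(cv D S) := eq_neg_of_add_eq_zero_right lemB
  have h1 : S ∘ₗ D = -(cv (cv S D) S) := by
    calc S ∘ₗ D = cv (S ∘ₗ D) ce := (cv_e_right _).symm
      _ = cv (S ∘ₗ D) (cv LinearMap.id S) := by rw [cvidS]
      _ = cv (cv (S ∘ₗ D) LinearMap.id) S := (cv_assoc _ _ _).symm
      _ = cv (-(cv S D)) S := by rw [hA]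
      _ = -(cv (cv S D) S) := cv_neg_left _ _
  have h2 : D ∘ₗ S = -(cv (cv S D) S) := by
    calc D ∘ₗ S = cv ce (D ∘ₗ S) := (cv_e_left _).symm
      _ = cv (cv S LinearMap.id) (D ∘ₗ S) := by rw [cvSid]
      _ = cv S (cv LinearMap.id (D ∘ₗ S)) := cv_assoc _ _ _
      _ = cv S (-(cv D S)) := by rw [hB]
      _ = -(cv S (cv D S)) := cv_neg_right _ _
      _ = -(cv (cv S D) S) := by rw [← cv_assoc]
  have hfinal : S ∘ₗ D = D ∘ₗ S := h1.trans h2.symm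
  have := LinearMap.congr_fun hfinal a
  simpa [hD] using this
end

section
/- In a graded connected Hopf algebra H with a grading-compatible operator N(x) = x • 1 (grafting a single vertex) satisfying S(x•1) = (S(x)•1⁽¹⁾)S(1⁽²⁾)-style compatibility specialized as S∘N(x) = N∘S(x) - k·g·S(x) for x homogeneous of degree k and g a fixed primitive element, and defining the sequence of coefficients a_{i_1,...,i_n} by S(δ_n) = Σ_{i_1+2i_2+...+n i_n = n} a_{i_1,...,i_n} δ_1^{i_1}...δ_n^{i_n}, these coefficients satisfy: a_{0,...,0,1} = -1, and if i_n = 0, a_{i_1,...,i_n} = Σ_{j≥2, i_j≥1} (i_{j-1}+1) a_{i_1,...,i_{j-1}+1, i_j-1,...,i_{n-1}} - (n-1)[i_1≥1] a_{i_1-1,i_2,...,i_{n-1}}. -/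
open TensorProduct Coalgebra Finsupp

namespace CMAux

lemma toFinsupp_cons (k : ℕ) (s : Multiset ℕ) :
    Multiset.toFinsupp (k ::ₘ s) = Multiset.toFinsupp s + Finsupp.single k 1 := by
  rw [← Multiset.singleton_add, map_add, Multiset.toFinsupp_singleton, add_comm]

lemma toFinsupp_erase (k : ℕ) (s : Multiset ℕ) :
    Multiset.toFinsupp (s.erase k) = Multiset.toFinsupp s - Finsupp.single k 1 := by
  ext b
  rcases eq_or_ne b k with rfl | hb
  · simp [Multiset.count_erase_self]
  · simp [Multiset.count_erase_of_ne hb, Finsupp.single_apply, Ne.symm hb]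

lemma restore (i : ℕ →₀ ℕ) (k j : ℕ) (hkj : k ≠ j) (hk : 1 ≤ i k) :
    i - Finsupp.single k 1 + Finsupp.single j 1 + Finsupp.single k 1 - Finsupp.single j 1 = i := by
  ext b
  simp only [Finsupp.tsub_apply, Finsupp.add_apply, Finsupp.single_apply]
  rcases eq_or_ne k b with rfl | h1
  · rw [if_pos rfl, if_neg (fun h : j = k => hkj h.symm)]
    omega
  · rcases eq_or_ne j b with rfl | h2
    · rw [if_pos rfl, if_neg h1]; omega
    · rw [if_neg h1, if_neg h2]; omega

lemma add_sub_single (i : ℕ →₀ ℕ) (k : ℕ) :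
    i + Finsupp.single k 1 - Finsupp.single k 1 = i := by
  ext b
  simp only [Finsupp.tsub_apply, Finsupp.add_apply, Finsupp.single_apply]
  rcases eq_or_ne k b with rfl | h1
  · rw [if_pos rfl]; omega
  · rw [if_neg h1]; omega

lemma single_shift (n : ℕ) (hn : 1 ≤ n) :
    Finsupp.single (n + 1) 1 + Finsupp.single n 1 - Finsupp.single (n + 1) 1
      = Finsupp.single n 1 := by
  ext b
  simp only [Finsupp.tsub_apply, Finsupp.add_apply, Finsupp.single_apply]
  rcases eq_or_ne (n + 1) b with rfl | h1
  · rw [if_pos rfl, if_neg (by omega : ¬ n = n + 1)]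
    omega
  · rw [if_neg h1]
    omega

lemma sum_toMultiset (i : ℕ →₀ ℕ) :
    (Finsupp.toMultiset i).sum = ∑ k ∈ i.support, k * i k := by
  conv_lhs => rw [← Multiset.map_id (Finsupp.toMultiset i)]
  rw [Finset.sum_multiset_map_count, Finsupp.toFinset_toMultiset]
  exact Finset.sum_congr rfl fun k _ => by
    rw [Finsupp.count_toMultiset, smul_eq_mul, mul_comm, id]

variable {K : Type*} [Field K] {H : Type*} [CommRing H] [HopfAlgebra K H]

lemma prod_toFinsupp (δ : ℕ → H) (s : Multiset ℕ) :
    (Multiset.toFinsupp s).prod (fun k m => δ k ^ m) = (s.map δ).prod := by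
  induction s using Multiset.induction_on with
  | empty => simp
  | cons a s ih =>
      rw [toFinsupp_cons, Finsupp.prod_add_index' (fun _ => pow_zero _) (fun _ _ _ => pow_add _ _ _),
        ih, Multiset.map_cons, Multiset.prod_cons, mul_comm]
      congr 1
      simp

lemma N_one (bullet : H →ₗ[K] H →ₗ[K] H)
    (leibniz : ∀ a b c : H, bullet (a * b) c = bullet a c * b + a * bullet b c)
    (N : H →ₗ[K] H) (g : H) (hN : ∀ x : H, N x = bullet x g) : N (1 : H) = 0 := by
  have h := leibniz 1 1 g
  rw [mul_one, mul_one, one_mul] at h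
  rw [hN]
  exact (left_eq_add.mp h)

lemma N_mul (bullet : H →ₗ[K] H →ₗ[K] H)
    (leibniz : ∀ a b c : H, bullet (a * b) c = bullet a c * b + a * bullet b c)
    (N : H →ₗ[K] H) (g : H) (hN : ∀ x : H, N x = bullet x g) (x y : H) :
    N (x * y) = N x * y + x * N y := by
  rw [hN, hN, hN, leibniz]

lemma N_prod (bullet : H →ₗ[K] H →ₗ[K] H)
    (leibniz : ∀ a b c : H, bullet (a * b) c = bullet a c * b + a * bullet b c)
    (N : H →ₗ[K] H) (g : H) (hN : ∀ x : H, N x = bullet x g)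
    (δ : ℕ → H) (hδsucc : ∀ n : ℕ, 1 ≤ n → δ (n + 1) = N (δ n))
    (s : Multiset ℕ) (hs : ∀ x ∈ s, 1 ≤ x) :
    N ((s.map δ).prod)
      = (s.map fun k => (((k + 1) ::ₘ s.erase k).map δ).prod).sum := by
  induction s using Multiset.induction_on with
  | empty => simpa using N_one bullet leibniz N g hN
  | cons a t ih =>
      have ha : 1 ≤ a := hs a (Multiset.mem_cons_self a t)
      have ht : ∀ x ∈ t, 1 ≤ x := fun x hx => hs x (Multiset.mem_cons_of_mem hx)
      rw [Multiset.map_cons, Multiset.prod_cons,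
        N_mul bullet leibniz N g hN, ih ht, ← hδsucc a ha,
        Multiset.map_cons, Multiset.sum_cons, Multiset.erase_cons_head,
        Multiset.map_cons, Multiset.prod_cons]
      congr 1
      have hmap : Multiset.map (fun k => (Multiset.map δ ((k + 1) ::ₘ (a ::ₘ t).erase k)).prod) t
          = Multiset.map (fun k => δ a * (Multiset.map δ ((k + 1) ::ₘ t.erase k)).prod) t := by
        apply Multiset.map_congr rfl
        intro x hx
        have herase : (a ::ₘ t).erase x = a ::ₘ t.erase x := by
          rcases eq_or_ne x a with rfl | hxa
          · rw [Multiset.erase_cons_head]; exact (Multiset.cons_erase hx).symm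
          · exact Multiset.erase_cons_tail _ (Ne.symm hxa)
        rw [herase, Multiset.map_cons, Multiset.map_cons, Multiset.prod_cons, Multiset.map_cons,
          Multiset.prod_cons, Multiset.prod_cons]
        ring
      rw [hmap, Multiset.sum_map_mul_left]

lemma N_mon (bullet : H →ₗ[K] H →ₗ[K] H)
    (leibniz : ∀ a b c : H, bullet (a * b) c = bullet a c * b + a * bullet b c)
    (N : H →ₗ[K] H) (g : H) (hN : ∀ x : H, N x = bullet x g)
    (δ : ℕ → H) (hδsucc : ∀ n : ℕ, 1 ≤ n → δ (n + 1) = N (δ n))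
    (i : ℕ →₀ ℕ) (hi : i 0 = 0) :
    N (i.prod fun k m => δ k ^ m)
      = ∑ k ∈ i.support,
          i k • ((i - Finsupp.single k 1 + Finsupp.single (k + 1) 1).prod
            fun k m => δ k ^ m) := by
  have hsi : Multiset.toFinsupp (Finsupp.toMultiset i) = i := Finsupp.toMultiset_toFinsupp i
  have hs : ∀ x ∈ Finsupp.toMultiset i, 1 ≤ x := by
    intro x hx
    rw [Finsupp.mem_toMultiset] at hx
    rcases Nat.eq_zero_or_pos x with rfl | h
    · exact absurd (Finsupp.mem_support_iff.mp hx) (by simp [hi])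
    · exact h
  conv_lhs => rw [← hsi, prod_toFinsupp, N_prod bullet leibniz N g hN δ hδsucc _ hs]
  rw [Finset.sum_multiset_map_count]
  have hfin : (Finsupp.toMultiset i).toFinset = i.support := Finsupp.toFinset_toMultiset i
  rw [hfin]
  refine Finset.sum_congr rfl fun k hk => ?_
  rw [Finsupp.count_toMultiset]
  congr 1
  rw [← prod_toFinsupp δ, toFinsupp_cons, toFinsupp_erase, hsi]

lemma g_mul_mon (δ : ℕ → H) (i : ℕ →₀ ℕ) :
    δ 1 * (i.prod fun k m => δ k ^ m)
      = (i + Finsupp.single 1 1).prod fun k m => δ k ^ m := by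
  rw [Finsupp.prod_add_index' (fun _ => pow_zero _) (fun _ _ _ => pow_add _ _ _), mul_comm]
  congr 1
  simp

lemma S_one : HopfAlgebra.antipode (R := K) (1 : H) = 1 := by
  have h := HopfAlgebra.mul_antipode_rTensor_comul_apply (R := K) (A := H) 1
  rw [Bialgebra.comul_one, Bialgebra.counit_one, Algebra.TensorProduct.one_def] at h
  simpa using h

lemma counit_g (hne : (1 : H) ≠ 0) (g : H)
    (hgprim : comul (R := K) g = g ⊗ₜ[K] 1 + 1 ⊗ₜ[K] g) :
    counit (R := K) g = 0 := by
  have h := rTensor_counit_comul (R := K) g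
  rw [hgprim, map_add] at h
  simp only [LinearMap.rTensor_tmul, Bialgebra.counit_one] at h
  have h2 : (counit (R := K) g) ⊗ₜ[K] (1 : H) = 0 := by
    have := congrArg (fun z => z - (1 : K) ⊗ₜ[K] g) h
    simpa using this
  have h3 := congrArg (TensorProduct.lid K H) h2
  simp only [map_zero, TensorProduct.lid_tmul] at h3
  rcases smul_eq_zero.mp h3 with h4 | h4
  · exact h4
  · exact absurd h4 hne

lemma S_g (hne : (1 : H) ≠ 0) (g : H)
    (hgprim : comul (R := K) g = g ⊗ₜ[K] 1 + 1 ⊗ₜ[K] g) :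
    HopfAlgebra.antipode (R := K) g = -g := by
  have h := HopfAlgebra.mul_antipode_rTensor_comul_apply (R := K) (A := H) g
  rw [hgprim, map_add, counit_g hne g hgprim] at h
  simp only [LinearMap.rTensor_tmul, map_add, LinearMap.mul'_apply, S_one, map_zero,
    mul_one, one_mul] at h
  exact eq_neg_of_add_eq_zero_left h

/-- Replace one part `k` of a partition of `n` by `k+1`. -/
def bumpP {n : ℕ} (p : n.Partition) (k : ℕ) (hk : k ∈ p.parts) : (n + 1).Partition where
  parts := (k + 1) ::ₘ p.parts.erase k
  parts_pos := by
    intro i hi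
    rcases Multiset.mem_cons.mp hi with rfl | h
    · omega
    · exact p.parts_pos (Multiset.mem_of_mem_erase h)
  parts_sum := by
    have h1 : k + (p.parts.erase k).sum = n := by
      rw [← Multiset.sum_cons, Multiset.cons_erase hk, p.parts_sum]
    rw [Multiset.sum_cons]
    omega

/-- Replace one part `j ≥ 2` of a partition of `n+1` by `j-1`. -/
def dropP {n : ℕ} (q : (n + 1).Partition) (j : ℕ) (hj : j ∈ q.parts) (h2 : 2 ≤ j) :
    n.Partition where
  parts := (j - 1) ::ₘ q.parts.erase j
  parts_pos := by
    intro i hi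
    rcases Multiset.mem_cons.mp hi with rfl | h
    · omega
    · exact q.parts_pos (Multiset.mem_of_mem_erase h)
  parts_sum := by
    have h1 : j + (q.parts.erase j).sum = n + 1 := by
      rw [← Multiset.sum_cons, Multiset.cons_erase hj, q.parts_sum]
    rw [Multiset.sum_cons]
    omega

/-- Add a part `1` to a partition of `n`. -/
def addOneP {n : ℕ} (p : n.Partition) : (n + 1).Partition where
  parts := 1 ::ₘ p.parts
  parts_pos := by
    intro i hi
    rcases Multiset.mem_cons.mp hi with rfl | h
    · omega
    · exact p.parts_pos h
  parts_sum := by rw [Multiset.sum_cons, p.parts_sum, add_comm]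

/-- Remove a part `1` from a partition of `n+1`. -/
def dropOneP {n : ℕ} (q : (n + 1).Partition) (h1 : 1 ∈ q.parts) : n.Partition where
  parts := q.parts.erase 1
  parts_pos := fun h => q.parts_pos (Multiset.mem_of_mem_erase h)
  parts_sum := by
    have h2 : 1 + (q.parts.erase 1).sum = n + 1 := by
      rw [← Multiset.sum_cons, Multiset.cons_erase h1, q.parts_sum]
    omega


lemma claimA (δ : ℕ → H) (a : (ℕ →₀ ℕ) → K) (n : ℕ) :
    ∑ p : n.Partition, a (Multiset.toFinsupp p.parts)
        • ∑ k ∈ (Multiset.toFinsupp p.parts).support,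
            (Multiset.toFinsupp p.parts) k
              • ((Multiset.toFinsupp p.parts - Finsupp.single k 1 + Finsupp.single (k + 1) 1).prod
                  fun k m => δ k ^ m)
      = ∑ q : (n + 1).Partition,
          (∑ j ∈ (Multiset.toFinsupp q.parts).support.filter fun j => 2 ≤ j,
            (((Multiset.toFinsupp q.parts) (j - 1) : K) + 1)
              * a (Multiset.toFinsupp q.parts + Finsupp.single (j - 1) 1 - Finsupp.single j 1))
            • ((Multiset.toFinsupp q.parts).prod fun k m => δ k ^ m) := by
  have l1 : ∀ p : n.Partition, a (Multiset.toFinsupp p.parts)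
        • ∑ k ∈ (Multiset.toFinsupp p.parts).support,
            (Multiset.toFinsupp p.parts) k
              • ((Multiset.toFinsupp p.parts - Finsupp.single k 1 + Finsupp.single (k + 1) 1).prod
                  fun k m => δ k ^ m)
      = ∑ k ∈ (Multiset.toFinsupp p.parts).support,
          (a (Multiset.toFinsupp p.parts) * ((Multiset.toFinsupp p.parts) k : K))
            • ((Multiset.toFinsupp p.parts - Finsupp.single k 1 + Finsupp.single (k + 1) 1).prod
                fun k m => δ k ^ m) := by
    intro p
    rw [Finset.smul_sum]
    refine Finset.sum_congr rfl fun k _ => ?_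
    rw [← Nat.cast_smul_eq_nsmul K, smul_smul]
  have l2 : ∀ q : (n + 1).Partition,
      (∑ j ∈ (Multiset.toFinsupp q.parts).support.filter fun j => 2 ≤ j,
        (((Multiset.toFinsupp q.parts) (j - 1) : K) + 1)
          * a (Multiset.toFinsupp q.parts + Finsupp.single (j - 1) 1 - Finsupp.single j 1))
        • ((Multiset.toFinsupp q.parts).prod fun k m => δ k ^ m)
      = ∑ j ∈ (Multiset.toFinsupp q.parts).support.filter fun j => 2 ≤ j,
          ((((Multiset.toFinsupp q.parts) (j - 1) : K) + 1)
            * a (Multiset.toFinsupp q.parts + Finsupp.single (j - 1) 1 - Finsupp.single j 1))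
            • ((Multiset.toFinsupp q.parts).prod fun k m => δ k ^ m) := by
    intro q
    rw [Finset.sum_smul]
  simp only [l1, l2]
  rw [Finset.sum_sigma' Finset.univ (fun p : n.Partition => (Multiset.toFinsupp p.parts).support),
    Finset.sum_sigma' Finset.univ
      (fun q : (n + 1).Partition => (Multiset.toFinsupp q.parts).support.filter fun j => 2 ≤ j)]
  have memk : ∀ (x : Σ _ : n.Partition, ℕ),
      x ∈ Finset.univ.sigma (fun p : n.Partition => (Multiset.toFinsupp p.parts).support) →
        x.2 ∈ x.1.parts := fun x hx =>
    Multiset.mem_toFinset.mp (Finset.mem_sigma.mp hx).2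
  have memj : ∀ (y : Σ _ : (n + 1).Partition, ℕ),
      y ∈ Finset.univ.sigma (fun q : (n + 1).Partition =>
        (Multiset.toFinsupp q.parts).support.filter fun j => 2 ≤ j) →
        y.2 ∈ y.1.parts ∧ 2 ≤ y.2 := by
    intro y hy
    have h := (Finset.mem_sigma.mp hy).2
    rw [Finset.mem_filter] at h
    exact ⟨Multiset.mem_toFinset.mp h.1, h.2⟩
  refine Finset.sum_bij'
    (fun x hx => ⟨bumpP x.1 x.2 (memk x hx), x.2 + 1⟩)
    (fun y hy => ⟨dropP y.1 y.2 (memj y hy).1 (memj y hy).2, y.2 - 1⟩)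
    ?_ ?_ ?_ ?_ ?_
  · rintro ⟨p, k⟩ hx
    have hk : k ∈ p.parts := memk _ hx
    dsimp only
    rw [Finset.mem_sigma]
    refine ⟨Finset.mem_univ _, ?_⟩
    rw [Finset.mem_filter]
    constructor
    · exact Multiset.mem_toFinset.mpr (Multiset.mem_cons_self _ _)
    · exact Nat.succ_le_succ (p.parts_pos hk)
  · rintro ⟨q, j⟩ hy
    dsimp only
    rw [Finset.mem_sigma]
    exact ⟨Finset.mem_univ _, Multiset.mem_toFinset.mpr (Multiset.mem_cons_self _ _)⟩
  · rintro ⟨p, k⟩ hx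
    have hk : k ∈ p.parts := memk _ hx
    apply Sigma.ext
    · apply Nat.Partition.ext
      show (k + 1 - 1) ::ₘ (((k + 1) ::ₘ p.parts.erase k).erase (k + 1)) = p.parts
      rw [Multiset.erase_cons_head, Nat.add_sub_cancel, Multiset.cons_erase hk]
    · exact heq_of_eq (by omega : k + 1 - 1 = k)
  · rintro ⟨q, j⟩ hy
    have hj1 : j ∈ q.parts := (memj _ hy).1
    have hj2 : 2 ≤ j := (memj _ hy).2
    apply Sigma.ext
    · apply Nat.Partition.ext
      show (j - 1 + 1) ::ₘ (((j - 1) ::ₘ q.parts.erase j).erase (j - 1)) = q.parts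
      rw [Multiset.erase_cons_head, Nat.sub_add_cancel (by omega : 1 ≤ j),
        Multiset.cons_erase hj1]
    · exact heq_of_eq (by omega : j - 1 + 1 = j)
  · rintro ⟨p, k⟩ hx
    have hk : k ∈ p.parts := memk _ hx
    have hcount : 1 ≤ (Multiset.toFinsupp p.parts) k := Multiset.count_pos.mpr hk
    have htfb : Multiset.toFinsupp ((bumpP p k hk).parts)
        = Multiset.toFinsupp p.parts - Finsupp.single k 1 + Finsupp.single (k + 1) 1 := by
      show Multiset.toFinsupp ((k + 1) ::ₘ p.parts.erase k) = _
      rw [toFinsupp_cons, toFinsupp_erase]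
    dsimp only
    rw [Nat.add_sub_cancel]
    have harg : Multiset.toFinsupp ((bumpP p k hk).parts) + Finsupp.single k 1
        - Finsupp.single (k + 1) 1 = Multiset.toFinsupp p.parts := by
      rw [htfb]
      exact restore _ k (k + 1) (by omega) hcount
    rw [harg, htfb]
    have hco : (((Multiset.toFinsupp p.parts - Finsupp.single k 1 + Finsupp.single (k + 1) 1) : ℕ →₀ ℕ) k) + 1
        = (Multiset.toFinsupp p.parts) k := by
      simp only [Finsupp.add_apply, Finsupp.tsub_apply, Finsupp.single_apply]
      split_ifs <;> omega
    have hcoK : ((((Multiset.toFinsupp p.parts - Finsupp.single k 1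
          + Finsupp.single (k + 1) 1) : ℕ →₀ ℕ) k : K) + 1)
        = ((Multiset.toFinsupp p.parts) k : K) := by
      rw [← hco]
      push_cast
      ring
    rw [hcoK, mul_comm]

lemma claimB (δ : ℕ → H) (a : (ℕ →₀ ℕ) → K) (n : ℕ) :
    ∑ p : n.Partition, a (Multiset.toFinsupp p.parts)
        • ((Multiset.toFinsupp p.parts + Finsupp.single 1 1).prod fun k m => δ k ^ m)
      = ∑ q : (n + 1).Partition,
          (if 1 ≤ (Multiset.toFinsupp q.parts) 1
            then a (Multiset.toFinsupp q.parts - Finsupp.single 1 1) else 0)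
            • ((Multiset.toFinsupp q.parts).prod fun k m => δ k ^ m) := by
  have l2 : ∀ q : (n + 1).Partition,
      (if 1 ≤ (Multiset.toFinsupp q.parts) 1
        then a (Multiset.toFinsupp q.parts - Finsupp.single 1 1) else 0)
        • ((Multiset.toFinsupp q.parts).prod fun k m => δ k ^ m)
      = if 1 ≤ (Multiset.toFinsupp q.parts) 1
          then a (Multiset.toFinsupp q.parts - Finsupp.single 1 1)
            • ((Multiset.toFinsupp q.parts).prod fun k m => δ k ^ m) else 0 := by
    intro q
    split_ifs with h
    · rfl
    · rw [zero_smul]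
  simp only [l2]
  rw [← Finset.sum_filter]
  refine Finset.sum_bij'
    (fun (p : n.Partition) (hp : p ∈ Finset.univ) => addOneP p)
    (fun (q : (n + 1).Partition) hq => dropOneP q
      (Multiset.count_pos.mp (Nat.lt_of_lt_of_le Nat.zero_lt_one
        (Finset.mem_filter.mp hq).2)))
    ?_ ?_ ?_ ?_ ?_
  · intro p _
    rw [Finset.mem_filter]
    refine ⟨Finset.mem_univ _, ?_⟩
    show 1 ≤ Multiset.count 1 (1 ::ₘ p.parts)
    rw [Multiset.count_cons_self]
    omega
  · intro q _
    exact Finset.mem_univ _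
  · intro p _
    apply Nat.Partition.ext
    show (1 ::ₘ p.parts).erase 1 = p.parts
    exact Multiset.erase_cons_head 1 p.parts
  · intro q hq
    apply Nat.Partition.ext
    show 1 ::ₘ (q.parts.erase 1) = q.parts
    exact Multiset.cons_erase (Multiset.count_pos.mp (Nat.lt_of_lt_of_le Nat.zero_lt_one
      (Finset.mem_filter.mp hq).2))
  · intro p _
    have htf : Multiset.toFinsupp ((addOneP p).parts)
        = Multiset.toFinsupp p.parts + Finsupp.single 1 1 := by
      show Multiset.toFinsupp (1 ::ₘ p.parts) = _
      rw [toFinsupp_cons]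
    rw [htf, add_sub_single]


lemma key
    (bullet : H →ₗ[K] H →ₗ[K] H)
    (leibniz : ∀ a b c : H, bullet (a * b) c = bullet a c * b + a * bullet b c)
    (N : H →ₗ[K] H) (g : H)
    (hN : ∀ x : H, N x = bullet x g)
    (δ : ℕ → H) (hδ1 : δ 1 = g)
    (hδsucc : ∀ n : ℕ, 1 ≤ n → δ (n + 1) = N (δ n))
    (𝒜 : ℕ → Submodule K H)
    (hδdeg : ∀ n : ℕ, 1 ≤ n → δ n ∈ 𝒜 n)
    (hSN : ∀ (k : ℕ) (x : H), x ∈ 𝒜 k →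
      HopfAlgebra.antipode (R := K) (N x)
        = N (HopfAlgebra.antipode (R := K) x)
          - (k : K) • (g * HopfAlgebra.antipode (R := K) x))
    (a : (ℕ →₀ ℕ) → K)
    (ha : ∀ n : ℕ, 1 ≤ n → HopfAlgebra.antipode (R := K) (δ n)
      = ∑ p : n.Partition, a (Multiset.toFinsupp p.parts)
          • (Multiset.toFinsupp p.parts).prod fun k m => δ k ^ m)
    (coeff : ∀ (m : ℕ) (c d : m.Partition → K),
      (∑ p : m.Partition, c p • ((Multiset.toFinsupp p.parts).prod fun k m => δ k ^ m)
        = ∑ p : m.Partition, d p • ((Multiset.toFinsupp p.parts).prod fun k m => δ k ^ m)) →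
      ∀ p, c p = d p)
    (n : ℕ) (hn : 1 ≤ n) (q : (n + 1).Partition) :
    a (Multiset.toFinsupp q.parts)
      = (∑ j ∈ (Multiset.toFinsupp q.parts).support.filter fun j => 2 ≤ j,
          (((Multiset.toFinsupp q.parts) (j - 1) : K) + 1)
            * a (Multiset.toFinsupp q.parts + Finsupp.single (j - 1) 1 - Finsupp.single j 1))
        - (n : K) * (if 1 ≤ (Multiset.toFinsupp q.parts) 1
            then a (Multiset.toFinsupp q.parts - Finsupp.single 1 1) else 0) := by
  have htf0 : ∀ (m : ℕ) (p : m.Partition), (Multiset.toFinsupp p.parts) 0 = 0 := by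
    intro m p
    rw [Multiset.toFinsupp_apply, Multiset.count_eq_zero]
    intro h
    exact absurd (p.parts_pos h) (lt_irrefl 0)
  have eq1 : HopfAlgebra.antipode (R := K) (δ (n + 1))
      = N (HopfAlgebra.antipode (R := K) (δ n))
        - (n : K) • (g * HopfAlgebra.antipode (R := K) (δ n)) := by
    rw [hδsucc n hn]
    exact hSN n (δ n) (hδdeg n hn)
  rw [ha (n + 1) (by omega), ha n hn] at eq1
  have hNpart : N (∑ p : n.Partition, a (Multiset.toFinsupp p.parts)
        • ((Multiset.toFinsupp p.parts).prod fun k m => δ k ^ m))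
      = ∑ p : n.Partition, a (Multiset.toFinsupp p.parts)
          • ∑ k ∈ (Multiset.toFinsupp p.parts).support,
              (Multiset.toFinsupp p.parts) k
                • ((Multiset.toFinsupp p.parts - Finsupp.single k 1
                    + Finsupp.single (k + 1) 1).prod fun k m => δ k ^ m) := by
    rw [map_sum]
    refine Finset.sum_congr rfl fun p _ => ?_
    rw [LinearMap.map_smul, N_mon bullet leibniz N g hN δ hδsucc _ (htf0 n p)]
  have hgpart : g * (∑ p : n.Partition, a (Multiset.toFinsupp p.parts)
        • ((Multiset.toFinsupp p.parts).prod fun k m => δ k ^ m))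
      = ∑ p : n.Partition, a (Multiset.toFinsupp p.parts)
          • ((Multiset.toFinsupp p.parts + Finsupp.single 1 1).prod fun k m => δ k ^ m) := by
    rw [Finset.mul_sum]
    refine Finset.sum_congr rfl fun p _ => ?_
    rw [mul_smul_comm, ← hδ1, g_mul_mon]
  rw [hNpart, hgpart, claimA δ a n, claimB δ a n, Finset.smul_sum] at eq1
  have eq2 : ∑ q : (n + 1).Partition, a (Multiset.toFinsupp q.parts)
        • ((Multiset.toFinsupp q.parts).prod fun k m => δ k ^ m)
      = ∑ q : (n + 1).Partition,
          ((∑ j ∈ (Multiset.toFinsupp q.parts).support.filter fun j => 2 ≤ j,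
            (((Multiset.toFinsupp q.parts) (j - 1) : K) + 1)
              * a (Multiset.toFinsupp q.parts + Finsupp.single (j - 1) 1 - Finsupp.single j 1))
          - (n : K) * (if 1 ≤ (Multiset.toFinsupp q.parts) 1
              then a (Multiset.toFinsupp q.parts - Finsupp.single 1 1) else 0))
            • ((Multiset.toFinsupp q.parts).prod fun k m => δ k ^ m) := by
    rw [eq1, ← Finset.sum_sub_distrib]
    refine Finset.sum_congr rfl fun q _ => ?_
    rw [smul_smul, ← sub_smul]
  exact coeff (n + 1) _ _ eq2 q

lemma prod_single_one (δ : ℕ → H) (n : ℕ) :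
    (Finsupp.single n 1).prod (fun k m => δ k ^ m) = δ n := by
  rw [← Multiset.toFinsupp_singleton, prod_toFinsupp]
  simp

end CMAux

open CMAux

/-- In a graded connected commutative Hopf algebra `H` with a Com-PreLie product `•`, the
growth operator `N x = x • g` (grafting a single vertex `g = δ 1`) satisfying the antipode
compatibility `S (N x) = N (S x) - k • (g * S x)` on homogeneous elements of degree `k`,
the coefficients of the expansion of `S (δ n)` on the monomials in the `δ_k` (indexed by
partitions of `n`) satisfy `a_{0,…,0,1} = -1` and, when `i_n = 0`,
`a_{i_1,…,i_n} = Σ_{j ≥ 2, i_j ≥ 1} (i_{j-1}+1) a_{i_1,…,i_{j-1}+1,i_j-1,…,i_{n-1}}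
  - (n-1)[i_1 ≥ 1] a_{i_1-1,i_2,…,i_{n-1}}`. -/
theorem connesMoscovici_antipode_coeff_recursion
    (K : Type*) [Field K] [CharZero K]
    (H : Type*) [CommRing H] [HopfAlgebra K H]
    (𝒜 : ℕ → Submodule K H) [GradedAlgebra 𝒜]
    (hconn : 𝒜 0 = Submodule.span K {1})
    (bullet : H →ₗ[K] H →ₗ[K] H)
    (leibniz : ∀ a b c : H, bullet (a * b) c = bullet a c * b + a * bullet b c)
    (N : H →ₗ[K] H) (g : H)
    (hgprim : comul (R := K) g = g ⊗ₜ[K] 1 + 1 ⊗ₜ[K] g)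
    (hN : ∀ x : H, N x = bullet x g)
    (δ : ℕ → H) (hδ1 : δ 1 = g)
    (hδsucc : ∀ n : ℕ, 1 ≤ n → δ (n + 1) = N (δ n))
    (hδdeg : ∀ n : ℕ, 1 ≤ n → δ n ∈ 𝒜 n)
    (hSN : ∀ (k : ℕ) (x : H), x ∈ 𝒜 k →
      HopfAlgebra.antipode (R := K) (N x)
        = N (HopfAlgebra.antipode (R := K) x)
          - (k : K) • (g * HopfAlgebra.antipode (R := K) x))
    (a : (ℕ →₀ ℕ) → K)
    (ha : ∀ n : ℕ, 1 ≤ n → HopfAlgebra.antipode (R := K) (δ n)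
      = ∑ p : n.Partition, a (Multiset.toFinsupp p.parts)
          • (Multiset.toFinsupp p.parts).prod fun k m => δ k ^ m)
    (hind : LinearIndependent K
      fun q : Σ n : ℕ, n.Partition =>
        (Multiset.toFinsupp q.2.parts).prod fun k m => δ k ^ m) :
    (∀ n : ℕ, 1 ≤ n → a (Finsupp.single n 1) = -1) ∧
    (∀ n : ℕ, 1 ≤ n → ∀ i : ℕ →₀ ℕ, i 0 = 0 →
      (∑ k ∈ i.support, k * i k) = n → i n = 0 →
      a i = (∑ j ∈ i.support.filter fun j => 2 ≤ j,
              ((i (j - 1) : K) + 1) * a (i + Finsupp.single (j - 1) 1 - Finsupp.single j 1))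
        - ((n : K) - 1) * (if 1 ≤ i 1 then a (i - Finsupp.single 1 1) else 0)) := by
  -- nontriviality
  have hne : (1 : H) ≠ 0 := by
    have h0 := hind.ne_zero ⟨0, default⟩
    have hparts : (default : Nat.Partition 0).parts = 0 := rfl
    rw [hparts] at h0
    rwa [show Multiset.toFinsupp (0 : Multiset ℕ) = 0 from map_zero _,
      Finsupp.prod_zero_index] at h0
  -- coefficient comparison
  have coeff : ∀ (m : ℕ) (c d : m.Partition → K),
      (∑ p : m.Partition, c p • ((Multiset.toFinsupp p.parts).prod fun k m => δ k ^ m)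
        = ∑ p : m.Partition, d p • ((Multiset.toFinsupp p.parts).prod fun k m => δ k ^ m)) →
      ∀ p, c p = d p := by
    intro m c d h p
    have li : LinearIndependent K (fun p : m.Partition =>
        (Multiset.toFinsupp p.parts).prod fun k m => δ k ^ m) :=
      hind.comp (Sigma.mk m) sigma_mk_injective
    have h0 : ∑ p : m.Partition, (c p - d p)
        • ((Multiset.toFinsupp p.parts).prod fun k m => δ k ^ m) = 0 := by
      simp only [sub_smul]
      rw [Finset.sum_sub_distrib, h, sub_self]
    have := Fintype.linearIndependent_iff.mp li (fun p => c p - d p) h0 p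
    exact sub_eq_zero.mp this
  have keyhyp := key bullet leibniz N g hN δ hδ1 hδsucc 𝒜 hδdeg hSN a ha coeff
  -- part 1
  have part1 : ∀ n : ℕ, 1 ≤ n → a (Finsupp.single n 1) = -1 := by
    intro n hn
    induction n with
    | zero => omega
    | succ m ih =>
      rcases Nat.eq_zero_or_pos m with rfl | hm
      · -- base case n = 1
        show a (Finsupp.single 1 1) = -1
        have hδ1ne : δ 1 ≠ 0 := by
          have h0 := hind.ne_zero ⟨1, default⟩
          rwa [Nat.Partition.partition_one_parts, Multiset.toFinsupp_singleton,
            prod_single_one] at h0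
        have hS1 : HopfAlgebra.antipode (R := K) (δ 1)
            = a (Finsupp.single 1 1) • δ 1 := by
          rw [ha 1 le_rfl, Fintype.sum_unique, Nat.Partition.partition_one_parts,
            Multiset.toFinsupp_singleton, prod_single_one]
        rw [hδ1, S_g hne g hgprim, ← hδ1] at hS1
        have : (a (Finsupp.single 1 1) + 1) • δ 1 = 0 := by
          rw [add_smul, one_smul, ← hS1]
          abel
        rcases smul_eq_zero.mp this with h | h
        · exact eq_neg_of_add_eq_zero_left h
        · exact absurd h hδ1ne
      · -- inductive step
        have hq := keyhyp m hm (Nat.Partition.indiscrete (m + 1))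
        rw [Nat.Partition.indiscrete_parts (by omega), Multiset.toFinsupp_singleton] at hq
        have hsupp : (Finsupp.single (m + 1) 1).support = {m + 1} :=
          Finsupp.support_single_ne_zero _ one_ne_zero
        rw [hsupp] at hq
        have hfilter : ({m + 1} : Finset ℕ).filter (fun j => 2 ≤ j) = {m + 1} := by
          rw [Finset.filter_singleton, if_pos (by omega)]
        rw [hfilter, Finset.sum_singleton] at hq
        have h1 : (Finsupp.single (m + 1) 1) (m + 1 - 1) = 0 := by
          rw [Finsupp.single_apply, if_neg (by omega)]
        have h2 : (Finsupp.single (m + 1) 1) 1 = 0 := by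
          rw [Finsupp.single_apply, if_neg (by omega)]
        rw [h1, h2, if_neg (by omega)] at hq
        have h3 : Finsupp.single (m + 1) 1 + Finsupp.single (m + 1 - 1) 1
            - Finsupp.single (m + 1) 1 = Finsupp.single m 1 := by
          rw [show m + 1 - 1 = m from rfl]
          exact single_shift m hm
        rw [h3, ih hm] at hq
        rw [hq]
        push_cast
        ring
  refine ⟨part1, ?_⟩
  -- part 2
  intro n hn i hi0 hsum hin
  rcases n with _ | m
  · omega
  rcases Nat.eq_zero_or_pos m with rfl | hm
  · -- n = 1 : impossible
    exfalso
    rcases Finset.eq_empty_or_nonempty i.support with he | ⟨k, hk⟩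
    · rw [he, Finset.sum_empty] at hsum
      omega
    · have hle : k * i k ≤ 0 + 1 := by
        rw [← hsum]
        exact Finset.single_le_sum (f := fun k => k * i k) (fun _ _ => Nat.zero_le _) hk
      have hik : i k ≠ 0 := Finsupp.mem_support_iff.mp hk
      have hk0 : k ≠ 0 := by
        intro h
        exact hik (h ▸ hi0)
      have hk1 : k ≠ 1 := by
        intro h
        exact hik (h ▸ hin)
      have h2k : 2 ≤ k := by omega
      have h1ik : 1 ≤ i k := by omega
      have hmul : 2 * 1 ≤ k * i k := Nat.mul_le_mul h2k h1ik
      have := le_trans hmul hle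
      omega
  · -- n = m + 1 with m ≥ 1
    have hpos : ∀ {x : ℕ}, x ∈ Finsupp.toMultiset i → 0 < x := by
      intro x hx
      rw [Finsupp.mem_toMultiset] at hx
      rcases Nat.eq_zero_or_pos x with rfl | h
      · exact absurd (Finsupp.mem_support_iff.mp hx) (by simp [hi0])
      · exact h
    let q : (m + 1).Partition :=
      ⟨Finsupp.toMultiset i, hpos, by rw [CMAux.sum_toMultiset]; exact hsum⟩
    have htfq : Multiset.toFinsupp q.parts = i := Finsupp.toMultiset_toFinsupp i
    have hq := keyhyp m hm q
    rw [htfq] at hq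
    rw [hq]
    have hc : ((m + 1 : ℕ) : K) - 1 = (m : K) := by push_cast; ring
    rw [hc]
end

section
/- Define integer coefficients a by a_{0,...,0,1} = -1 (the 1 in position n) and, when i_n = 0, a_{i_1,...,i_n} = Σ_{j≥2, i_j≥1} (i_{j-1}+1) a_{i_1,...,i_{j-1}+1, i_j-1,...,i_{n-1}} - (n-1)[i_1≥1] a_{i_1-1,...,i_{n-1}}. Then for all n ≥ 1, a_{n,0,...,0} = (-1)^n (n-1)!. -/
/-- Let `a` be the integer coefficients defined on multi-indices `(i_1,…,i_n)` with
`1·i_1 + … + n·i_n = n` (encoded as finitely supported functions `ℕ →₀ ℕ` vanishing at `0`)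
by `a_{0,…,0,1} = -1` and, when `i_n = 0`,
`a_{i_1,…,i_n} = Σ_{j ≥ 2, i_j ≥ 1} (i_{j-1}+1) a_{i_1,…,i_{j-1}+1,i_j-1,…,i_{n-1}}
  - (n-1)[i_1 ≥ 1] a_{i_1-1,…,i_{n-1}}`.
Then for all `n ≥ 1`, `a_{n,0,…,0} = (-1)^n (n-1)!`. -/
theorem coeff_a_pure_first
    (a : (ℕ →₀ ℕ) → ℤ)
    (hbase : ∀ n : ℕ, 1 ≤ n → a (Finsupp.single n 1) = -1)
    (hrec : ∀ n : ℕ, 1 ≤ n → ∀ i : ℕ →₀ ℕ, i 0 = 0 →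
      (∑ k ∈ i.support, k * i k) = n → i n = 0 →
      a i = (∑ j ∈ i.support.filter fun j => 2 ≤ j,
              ((i (j - 1) : ℤ) + 1) * a (i + Finsupp.single (j - 1) 1 - Finsupp.single j 1))
        - ((n : ℤ) - 1) * (if 1 ≤ i 1 then a (i - Finsupp.single 1 1) else 0)) :
    ∀ n : ℕ, 1 ≤ n → a (Finsupp.single 1 n) = (-1) ^ n * (n - 1).factorial := by
  intro n hn
  induction n with
  | zero => omega
  | succ m ih =>
    rcases Nat.eq_zero_or_pos m with hm | hm
    · subst hm
      simpa using hbase 1 le_rfl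
    · have hm1 : (1 : ℕ) ≤ m := hm
      have key := hrec (m + 1) (by omega) (Finsupp.single 1 (m + 1))
        (by simp) ?_ ?_
      · have hsupp : (Finsupp.single 1 (m + 1)).support = {1} :=
          Finsupp.support_single_ne_zero _ (by omega)
        rw [hsupp] at key
        have hfilter : ({1} : Finset ℕ).filter (fun j => 2 ≤ j) = ∅ := by decide
        rw [hfilter, Finset.sum_empty] at key
        have happ : (Finsupp.single 1 (m + 1)) 1 = m + 1 := by simp
        rw [happ] at key
        rw [if_pos (by omega)] at key
        have hsub : Finsupp.single 1 (m + 1) - Finsupp.single 1 1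
            = Finsupp.single 1 m := by
          rw [← Finsupp.single_tsub]
          simp
        rw [hsub, ih hm1] at key
        rw [key]
        have hfact : (m + 1 - 1).factorial = m * (m - 1).factorial := by
          rcases Nat.exists_eq_add_of_le hm1 with ⟨k, rfl⟩
          simp [Nat.factorial_succ, Nat.add_comm 1 k]
        rw [hfact]
        push_cast
        ring
      · rw [Finsupp.support_single_ne_zero _ (by omega)]
        simp
      · rw [Finsupp.single_apply]
        split <;> omega
end

section
/- With the coefficients a defined by the recursion a_{0,...,0,1} = -1 and a_{i_1,...,i_n} = Σ_{j≥2, i_j≥1}(i_{j-1}+1) a_{i_1,...,i_{j-1}+1,i_j-1,...,i_{n-1}} - (n-1)[i_1≥1] a_{i_1-1,...,i_{n-1}} for i_n = 0: for all n ≥ 2, a_{n-2,1,0,...,0} = (-1)^{n-1} (n-1)! (n-1). -/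
/-- Auxiliary: `a (single 1 m) = (-1)^m (m-1)!` for `m ≥ 1`. -/
theorem coeff_a_one_aux
    (a : (ℕ →₀ ℕ) → ℤ)
    (hbase : ∀ n : ℕ, 1 ≤ n → a (Finsupp.single n 1) = -1)
    (hrec : ∀ n : ℕ, 1 ≤ n → ∀ i : ℕ →₀ ℕ, i 0 = 0 →
      (∑ k ∈ i.support, k * i k) = n → i n = 0 →
      a i = (∑ j ∈ i.support.filter fun j => 2 ≤ j,
              ((i (j - 1) : ℤ) + 1) * a (i + Finsupp.single (j - 1) 1 - Finsupp.single j 1))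
        - ((n : ℤ) - 1) * (if 1 ≤ i 1 then a (i - Finsupp.single 1 1) else 0)) :
    ∀ m : ℕ, 1 ≤ m → a (Finsupp.single 1 m) = (-1) ^ m * (m - 1).factorial := by
  intro m hm
  induction m, hm using Nat.le_induction with
  | base => simpa using hbase 1 le_rfl
  | succ m hm ih =>
    have hsupp : (Finsupp.single 1 (m + 1)).support = {1} :=
      Finsupp.support_single_ne_zero 1 (by omega)
    have h0 : (Finsupp.single 1 (m + 1)) 0 = 0 := by
      simp [Finsupp.single_apply]
    have hsum : (∑ k ∈ (Finsupp.single 1 (m + 1)).support, k * (Finsupp.single 1 (m + 1)) k)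
        = m + 1 := by
      rw [hsupp]; simp
    have htop : (Finsupp.single 1 (m + 1)) (m + 1) = 0 := by
      rw [Finsupp.single_apply]; simp; omega
    have h := hrec (m + 1) (by omega) (Finsupp.single 1 (m + 1)) h0 hsum htop
    rw [hsupp] at h
    have hfil : ({1} : Finset ℕ).filter (fun j => 2 ≤ j) = ∅ := by decide
    rw [hfil, Finset.sum_empty] at h
    have h1 : (Finsupp.single 1 (m + 1)) 1 = m + 1 := by simp
    rw [h1, if_pos (by omega)] at h
    have hsub : Finsupp.single 1 (m + 1) - Finsupp.single 1 1 = Finsupp.single 1 m := by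
      rw [← Finsupp.single_tsub, Nat.add_sub_cancel]
    rw [hsub, ih] at h
    rw [h]
    have hfac : ((m + 1 - 1).factorial : ℤ) = (m : ℤ) * ((m - 1).factorial : ℤ) := by
      simp only [Nat.add_sub_cancel]
      rw [← Nat.mul_factorial_pred (by omega : m ≠ 0)]
      push_cast
      ring
    rw [hfac]
    push_cast
    ring

/-- With the coefficients `a` defined by the stated recursion: for all `n ≥ 2`,
`a_{n-2,1,0,…,0} = (-1)^(n-1) (n-1)! (n-1)`. -/
theorem coeff_a_two
    (a : (ℕ →₀ ℕ) → ℤ)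
    (hbase : ∀ n : ℕ, 1 ≤ n → a (Finsupp.single n 1) = -1)
    (hrec : ∀ n : ℕ, 1 ≤ n → ∀ i : ℕ →₀ ℕ, i 0 = 0 →
      (∑ k ∈ i.support, k * i k) = n → i n = 0 →
      a i = (∑ j ∈ i.support.filter fun j => 2 ≤ j,
              ((i (j - 1) : ℤ) + 1) * a (i + Finsupp.single (j - 1) 1 - Finsupp.single j 1))
        - ((n : ℤ) - 1) * (if 1 ≤ i 1 then a (i - Finsupp.single 1 1) else 0)) :
    ∀ n : ℕ, 2 ≤ n →
      a (Finsupp.single 1 (n - 2) + Finsupp.single 2 1)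
        = (-1) ^ (n - 1) * (n - 1).factorial * ((n : ℤ) - 1) := by
  intro n hn
  induction n, hn using Nat.le_induction with
  | base => simpa using hbase 2 (by omega)
  | succ n hn ih =>
    -- n ≥ 2, prove for n + 1; the index is s = single 1 (n-1) + single 2 1
    set s : ℕ →₀ ℕ := Finsupp.single 1 (n + 1 - 2) + Finsupp.single 2 1 with hs
    have hn1 : n + 1 - 2 = n - 1 := by omega
    have hsupp : s.support = {1, 2} := by
      rw [hs, Finsupp.support_add_eq]
      · rw [Finsupp.support_single_ne_zero 1 (by omega),
          Finsupp.support_single_ne_zero 2 (by omega)]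
        rfl
      · rw [Finsupp.support_single_ne_zero 1 (by omega),
          Finsupp.support_single_ne_zero 2 (by omega)]
        simp
    have hs1 : s 1 = n - 1 := by simp [hs, Finsupp.single_apply, hn1]
    have hs2 : s 2 = 1 := by simp [hs, Finsupp.single_apply]
    have h0 : s 0 = 0 := by simp [hs, Finsupp.single_apply]
    have hsum : (∑ k ∈ s.support, k * s k) = n + 1 := by
      rw [hsupp, Finset.sum_pair (by omega : (1:ℕ) ≠ 2), hs1, hs2]
      omega
    have htop : s (n + 1) = 0 := by
      simp [hs, Finsupp.single_apply, show n ≠ 0 by omega, show n ≠ 1 by omega]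
    have h := hrec (n + 1) (by omega) s h0 hsum htop
    rw [hsupp] at h
    have hfil : ({1, 2} : Finset ℕ).filter (fun j => 2 ≤ j) = {2} := by decide
    rw [hfil, Finset.sum_singleton] at h
    norm_num at h
    rw [hs1] at h
    have harg1 : s + Finsupp.single 1 1 - Finsupp.single 2 1 = Finsupp.single 1 n := by
      rw [hs, hn1]
      have : Finsupp.single 1 (n - 1) + Finsupp.single 2 1 + Finsupp.single 1 1
          = Finsupp.single 1 n + Finsupp.single 2 1 := by
        rw [add_right_comm, ← Finsupp.single_add, show n - 1 + 1 = n by omega]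
      rw [this, add_tsub_cancel_right]
    have harg2 : s - Finsupp.single 1 1 = Finsupp.single 1 (n - 2) + Finsupp.single 2 1 := by
      rw [hs, hn1]
      have : Finsupp.single 1 (n - 1) + Finsupp.single 2 1
          = (Finsupp.single 1 (n - 2) + Finsupp.single 2 1) + Finsupp.single 1 1 := by
        rw [add_right_comm, ← Finsupp.single_add, show n - 2 + 1 = n - 1 by omega]
      rw [this, add_tsub_cancel_right]
    rw [harg1, if_pos (by omega), harg2, ih,
      coeff_a_one_aux a hbase hrec n (by omega)] at h
    rw [h]
    obtain ⟨m, rfl⟩ : ∃ m, n = m + 2 := ⟨n - 2, by omega⟩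
    simp only [show m + 2 - 1 = m + 1 from rfl,
      show m + 2 + 1 - 1 = m + 2 from rfl]
    push_cast [Nat.factorial_succ]
    ring
end

section
/- With the coefficients a defined by the recursion a_{0,...,0,1} = -1 and a_{i_1,...,i_n} = Σ_{j≥2, i_j≥1}(i_{j-1}+1) a_{i_1,...,i_{j-1}+1,i_j-1,...,i_{n-1}} - (n-1)[i_1≥1] a_{i_1-1,...,i_{n-1}} for i_n = 0: for all n ≥ 3, the coefficient a_{1,0,...,0,1,0} (with 1 in positions 1 and n-1) equals n(n-1)/2 + 1. -/
/-- With the coefficients `a` defined by the stated recursion: for all `n ≥ 3`,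
`a_{1,0,…,0,1,0}` (with `1` in positions `1` and `n-1`) equals `n(n-1)/2 + 1`. -/
theorem coeff_a_one_and_penultimate
    (a : (ℕ →₀ ℕ) → ℤ)
    (hbase : ∀ n : ℕ, 1 ≤ n → a (Finsupp.single n 1) = -1)
    (hrec : ∀ n : ℕ, 1 ≤ n → ∀ i : ℕ →₀ ℕ, i 0 = 0 →
      (∑ k ∈ i.support, k * i k) = n → i n = 0 →
      a i = (∑ j ∈ i.support.filter fun j => 2 ≤ j,
              ((i (j - 1) : ℤ) + 1) * a (i + Finsupp.single (j - 1) 1 - Finsupp.single j 1))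
        - ((n : ℤ) - 1) * (if 1 ≤ i 1 then a (i - Finsupp.single 1 1) else 0)) :
    ∀ n : ℕ, 3 ≤ n →
      (a (Finsupp.single 1 1 + Finsupp.single (n - 1) 1) : ℚ)
        = (n : ℚ) * ((n : ℚ) - 1) / 2 + 1 := by
  -- a (single 1 2) = 1
  have h12 : a (Finsupp.single 1 2) = 1 := by
    have hsupp : (Finsupp.single 1 2 : ℕ →₀ ℕ).support = {1} :=
      Finsupp.support_single_ne_zero _ (by norm_num)
    have h := hrec 2 (by norm_num) (Finsupp.single 1 2)
      (by simp) (by rw [hsupp]; simp) (by simp [Finsupp.single_apply])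
    rw [h, hsupp]
    have hfil : ({1} : Finset ℕ).filter (fun j => 2 ≤ j) = ∅ := by decide
    rw [hfil]
    have hsub : (Finsupp.single 1 2 : ℕ →₀ ℕ) - Finsupp.single 1 1 = Finsupp.single 1 1 := by
      rw [show (Finsupp.single 1 2 : ℕ →₀ ℕ) = Finsupp.single 1 1 + Finsupp.single 1 1 by
        rw [← Finsupp.single_add]]
      exact add_tsub_cancel_right _ _
    simp [hsub, hbase 1 le_rfl]
  -- general recursion step for n ≥ 3
  have hrecn : ∀ n : ℕ, 3 ≤ n →
      a (Finsupp.single 1 1 + Finsupp.single (n-1) 1)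
        = (((Finsupp.single 1 1 + Finsupp.single (n-1) 1 : ℕ →₀ ℕ) (n-2) : ℤ) + 1)
            * a (Finsupp.single 1 1 + Finsupp.single (n-1) 1
                  + Finsupp.single (n-2) 1 - Finsupp.single (n-1) 1)
          + ((n : ℤ) - 1) := by
    intro n hn
    set i : ℕ →₀ ℕ := Finsupp.single 1 1 + Finsupp.single (n-1) 1 with hi
    have hne : (1:ℕ) ≠ n - 1 := by omega
    have hsupp : i.support = {1, n-1} := by
      rw [hi, Finsupp.support_add_eq, Finsupp.support_single_ne_zero _ one_ne_zero,
        Finsupp.support_single_ne_zero _ one_ne_zero]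
      · exact (Finset.insert_eq _ _).symm
      · rw [Finsupp.support_single_ne_zero _ one_ne_zero,
          Finsupp.support_single_ne_zero _ one_ne_zero]
        simp
        omega
    have hi1 : i 1 = 1 := by
      rw [hi, Finsupp.add_apply, Finsupp.single_apply, Finsupp.single_apply]
      split_ifs <;> first | contradiction | omega
    have hin1 : i (n-1) = 1 := by
      rw [hi, Finsupp.add_apply, Finsupp.single_apply, Finsupp.single_apply]
      split_ifs <;> first | contradiction | omega
    have h := hrec n (by omega) i
      (by
        rw [hi, Finsupp.add_apply, Finsupp.single_apply, Finsupp.single_apply]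
        split_ifs <;> first | contradiction | omega)
      (by
        rw [hsupp, Finset.sum_insert (by simp [hne]), Finset.sum_singleton, hi1, hin1]
        omega)
      (by
        rw [hi, Finsupp.add_apply, Finsupp.single_apply, Finsupp.single_apply]
        split_ifs <;> first | contradiction | omega)
    rw [h, hsupp]
    have hfil : ({1, n-1} : Finset ℕ).filter (fun j => 2 ≤ j) = {n-1} := by
      ext j; simp; omega
    rw [hfil, Finset.sum_singleton]
    have hsub : i - Finsupp.single 1 1 = Finsupp.single (n-1) 1 := by
      rw [hi]; exact add_tsub_cancel_left _ _
    rw [if_pos (by omega : 1 ≤ i 1), hsub, hbase (n-1) (by omega),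
      show n - 1 - 1 = n - 2 from by omega]
    ring
  intro n hn
  induction n, hn using Nat.le_induction with
  | base =>
    have h := hrecn 3 le_rfl
    rw [show (3:ℕ) - 1 = 2 from rfl, show (3:ℕ) - 2 = 1 from rfl] at h
    have hv1 : ((Finsupp.single 1 1 + Finsupp.single 2 1 : ℕ →₀ ℕ)) 1 = 1 := by
      rw [Finsupp.add_apply, Finsupp.single_apply, Finsupp.single_apply]
      norm_num
    have hsub : (Finsupp.single 1 1 + Finsupp.single 2 1
        + Finsupp.single 1 1 - Finsupp.single 2 1 : ℕ →₀ ℕ) = Finsupp.single 1 2 := by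
      rw [add_right_comm, ← Finsupp.single_add, add_tsub_cancel_right]
    rw [hv1, hsub, h12] at h
    rw [show (3:ℕ) - 1 = 2 from rfl, h]
    norm_num
  | succ n hn ih =>
    have h := hrecn (n+1) (by omega)
    rw [show n + 1 - 1 = n from rfl, show n + 1 - 2 = n - 1 from by omega] at h
    have hv0 : ((Finsupp.single 1 1 + Finsupp.single n 1 : ℕ →₀ ℕ)) (n-1) = 0 := by
      rw [Finsupp.add_apply, Finsupp.single_apply, Finsupp.single_apply]
      split_ifs <;> first | contradiction | omega
    have hsub : (Finsupp.single 1 1 + Finsupp.single n 1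
        + Finsupp.single (n-1) 1 - Finsupp.single n 1 : ℕ →₀ ℕ)
        = Finsupp.single 1 1 + Finsupp.single (n-1) 1 := by
      rw [add_right_comm, add_tsub_cancel_right]
    rw [hv0, hsub] at h
    norm_num at h
    rw [show n + 1 - 1 = n from rfl, h]
    push_cast [ih]
    ring
end

section
/- With the coefficients a defined by the recursion a_{0,...,0,1} = -1 and a_{i_1,...,i_n} = Σ_{j≥2, i_j≥1}(i_{j-1}+1) a_{i_1,...,i_{j-1}+1,i_j-1,...,i_{n-1}} - (n-1)[i_1≥1] a_{i_1-1,...,i_{n-1}} for i_n = 0: for all n ≥ 3, a_{n-3,0,1,0,...,0} = (-1)^n (n-1)! Σ_{1 ≤ p ≤ n-1} (p-1)/p. -/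
private theorem lemD (a : (ℕ →₀ ℕ) → ℤ)
    (hbase : ∀ n : ℕ, 1 ≤ n → a (Finsupp.single n 1) = -1)
    (hrec : ∀ n : ℕ, 1 ≤ n → ∀ i : ℕ →₀ ℕ, i 0 = 0 →
      (∑ k ∈ i.support, k * i k) = n → i n = 0 →
      a i = (∑ j ∈ i.support.filter fun j => 2 ≤ j,
              ((i (j - 1) : ℤ) + 1) * a (i + Finsupp.single (j - 1) 1 - Finsupp.single j 1))
        - ((n : ℤ) - 1) * (if 1 ≤ i 1 then a (i - Finsupp.single 1 1) else 0)) :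
    ∀ k : ℕ, 1 ≤ k → a (Finsupp.single 1 k) = (-1) ^ k * (k - 1).factorial := by
  intro k hk
  induction k, hk using Nat.le_induction with
  | base => simpa using hbase 1 le_rfl
  | succ k hk ih =>
    have hsupp : (Finsupp.single 1 (k+1) : ℕ →₀ ℕ).support = {1} :=
      Finsupp.support_single_ne_zero _ (by omega)
    have h := hrec (k+1) (by omega) (Finsupp.single 1 (k+1))
      (by simp) (by rw [hsupp]; simp) (Finsupp.single_eq_of_ne (by omega))
    rw [hsupp] at h
    have hsub : (Finsupp.single 1 (k+1) - Finsupp.single 1 1 : ℕ →₀ ℕ) = Finsupp.single 1 k := by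
      ext x
      simp only [Finsupp.tsub_apply, Finsupp.single_apply]
      split_ifs <;> omega
    rw [Finset.filter_singleton, if_neg (by norm_num), Finset.sum_empty] at h
    rw [Finsupp.single_eq_same, if_pos (by omega), hsub, ih] at h
    rw [h]
    have : k.factorial = k * (k-1).factorial := by
      rcases k with _ | k
      · omega
      · simp [Nat.factorial_succ]
    push_cast [this, pow_succ]
    ring

private theorem lemC (a : (ℕ →₀ ℕ) → ℤ)
    (hbase : ∀ n : ℕ, 1 ≤ n → a (Finsupp.single n 1) = -1)
    (hrec : ∀ n : ℕ, 1 ≤ n → ∀ i : ℕ →₀ ℕ, i 0 = 0 →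
      (∑ k ∈ i.support, k * i k) = n → i n = 0 →
      a i = (∑ j ∈ i.support.filter fun j => 2 ≤ j,
              ((i (j - 1) : ℤ) + 1) * a (i + Finsupp.single (j - 1) 1 - Finsupp.single j 1))
        - ((n : ℤ) - 1) * (if 1 ≤ i 1 then a (i - Finsupp.single 1 1) else 0))
    (lemD : ∀ k : ℕ, 1 ≤ k → a (Finsupp.single 1 k) = (-1) ^ k * (k - 1).factorial) :
    ∀ m : ℕ, 2 ≤ m → a (Finsupp.single 1 (m - 2) + Finsupp.single 2 1)
      = (-1) ^ (m - 1) * (m - 1).factorial * (m - 1) := by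
  intro m hm
  induction m, hm using Nat.le_induction with
  | base => simpa using hbase 2 (by omega)
  | succ m hm ih =>
    set i : ℕ →₀ ℕ := Finsupp.single 1 (m + 1 - 2) + Finsupp.single 2 1 with hi
    have hi1 : i 1 = m - 1 := by
      simp only [hi, Finsupp.add_apply, Finsupp.single_apply]; norm_num; omega
    have hi2 : i 2 = 1 := by
      simp only [hi, Finsupp.add_apply, Finsupp.single_apply]; norm_num
    have hsupp : i.support = {1, 2} := by
      rw [hi, Finsupp.support_add_eq] <;>
        rw [Finsupp.support_single_ne_zero _ (by omega : m + 1 - 2 ≠ 0),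
          Finsupp.support_single_ne_zero _ one_ne_zero]
      · rfl
      · decide
    have h := hrec (m+1) (by omega) i
      (by simp only [hi, Finsupp.add_apply]; rw [Finsupp.single_eq_of_ne (by omega),
            Finsupp.single_eq_of_ne (by omega)]; rfl)
      (by rw [hsupp, Finset.sum_insert (by decide), Finset.sum_singleton, hi1, hi2]; omega)
      (by simp only [hi, Finsupp.add_apply]; rw [Finsupp.single_eq_of_ne (by omega),
            Finsupp.single_eq_of_ne (by omega)]; rfl)
    have hfil : ({1, 2} : Finset ℕ).filter (fun j => 2 ≤ j) = {2} := by decide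
    have hmove : i + Finsupp.single (2 - 1) 1 - Finsupp.single 2 1 = Finsupp.single 1 m := by
      ext x
      simp only [hi, Finsupp.tsub_apply, Finsupp.add_apply, Finsupp.single_apply]
      split_ifs <;> omega
    have hdown : i - Finsupp.single 1 1 = Finsupp.single 1 (m - 2) + Finsupp.single 2 1 := by
      ext x
      simp only [hi, Finsupp.tsub_apply, Finsupp.add_apply, Finsupp.single_apply]
      split_ifs <;> omega
    rw [hsupp, hfil, Finset.sum_singleton, hmove, hi1, if_pos (by omega), hdown, ih,
      lemD m (by omega)] at h
    have h1 : (m - 1) + 1 = m := by omega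
    have h2 : m.factorial = m * (m-1).factorial := by
      rcases m with _ | m
      · omega
      · simp [Nat.factorial_succ]
    have h3 : (-1 : ℤ) ^ m = (-1) ^ (m - 1) * (-1) := by
      rw [← pow_succ, h1]
    have hc : ((m - 1 : ℕ) : ℤ) = (m : ℤ) - 1 := by omega
    rw [h, hc]
    simp only [show m + 1 - 1 = m from rfl]
    rw [h2, h3]
    push_cast
    ring

/-- With the coefficients `a` defined by the stated recursion: for all `n ≥ 3`,
`a_{n-3,0,1,0,…,0} = (-1)^n (n-1)! Σ_{1 ≤ p ≤ n-1} (p-1)/p`. -/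
theorem coeff_a_third
    (a : (ℕ →₀ ℕ) → ℤ)
    (hbase : ∀ n : ℕ, 1 ≤ n → a (Finsupp.single n 1) = -1)
    (hrec : ∀ n : ℕ, 1 ≤ n → ∀ i : ℕ →₀ ℕ, i 0 = 0 →
      (∑ k ∈ i.support, k * i k) = n → i n = 0 →
      a i = (∑ j ∈ i.support.filter fun j => 2 ≤ j,
              ((i (j - 1) : ℤ) + 1) * a (i + Finsupp.single (j - 1) 1 - Finsupp.single j 1))
        - ((n : ℤ) - 1) * (if 1 ≤ i 1 then a (i - Finsupp.single 1 1) else 0)) :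
    ∀ n : ℕ, 3 ≤ n →
      (a (Finsupp.single 1 (n - 3) + Finsupp.single 3 1) : ℚ)
        = (-1) ^ n * ((n - 1).factorial : ℚ)
            * ∑ p ∈ Finset.Icc 1 (n - 1), ((p : ℚ) - 1) / (p : ℚ) := by
  have hD := lemD a hbase hrec
  have hC := lemC a hbase hrec hD
  intro n hn
  induction n, hn using Nat.le_induction with
  | base =>
    rw [show (3:ℕ) - 3 = 0 from rfl, Finsupp.single_zero, zero_add, hbase 3 (by omega)]
    rw [show Finset.Icc 1 (3-1) = {1, 2} from rfl, Finset.sum_insert (by decide),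
      Finset.sum_singleton]
    norm_num
  | succ n hn ih =>
    obtain ⟨m, rfl⟩ : ∃ m, n = m + 3 := ⟨n - 3, by omega⟩
    simp only [show m + 3 + 1 - 3 = m + 1 from by omega,
      show m + 3 + 1 - 1 = m + 3 from by omega] at *
    simp only [show m + 3 - 3 = m from by omega, show m + 3 - 1 = m + 2 from by omega] at ih
    set i : ℕ →₀ ℕ := Finsupp.single 1 (m + 1) + Finsupp.single 3 1 with hi
    have hi1 : i 1 = m + 1 := by
      simp only [hi, Finsupp.add_apply]
      rw [Finsupp.single_eq_same, Finsupp.single_eq_of_ne (by omega)]; omega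
    have hi2 : i 2 = 0 := by
      simp only [hi, Finsupp.add_apply]
      rw [Finsupp.single_eq_of_ne (by omega), Finsupp.single_eq_of_ne (by omega)]
      rfl
    have hsupp : i.support = {1, 3} := by
      rw [hi, Finsupp.support_add_eq] <;>
        rw [Finsupp.support_single_ne_zero _ (by omega : m + 1 ≠ 0),
          Finsupp.support_single_ne_zero _ one_ne_zero]
      · rfl
      · decide
    have hi3 : i 3 = 1 := by
      simp only [hi, Finsupp.add_apply]
      rw [Finsupp.single_eq_same, Finsupp.single_eq_of_ne (by omega)]
    have h := hrec (m+4) (by omega) i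
      (by simp only [hi, Finsupp.add_apply]; rw [Finsupp.single_eq_of_ne (by omega),
            Finsupp.single_eq_of_ne (by omega)]; rfl)
      (by rw [hsupp, Finset.sum_insert (by decide), Finset.sum_singleton, hi1, hi3]; omega)
      (by simp only [hi, Finsupp.add_apply]; rw [Finsupp.single_eq_of_ne (by omega),
            Finsupp.single_eq_of_ne (by omega)]; rfl)
    have hfil : ({1, 3} : Finset ℕ).filter (fun j => 2 ≤ j) = {3} := by decide
    have hmove : i + Finsupp.single (3 - 1) 1 - Finsupp.single 3 1
        = Finsupp.single 1 (m + 1) + Finsupp.single 2 1 := by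
      ext x
      simp only [hi, Finsupp.tsub_apply, Finsupp.add_apply, Finsupp.single_apply]
      split_ifs <;> omega
    have hdown : i - Finsupp.single 1 1 = Finsupp.single 1 m + Finsupp.single 3 1 := by
      ext x
      simp only [hi, Finsupp.tsub_apply, Finsupp.add_apply, Finsupp.single_apply]
      split_ifs <;> omega
    have hCval := hC (m + 3) (by omega)
    simp only [show m + 3 - 2 = m + 1 from by omega,
      show m + 3 - 1 = m + 2 from by omega] at hCval
    rw [hsupp, hfil, Finset.sum_singleton, hmove, show (3:ℕ) - 1 = 2 from rfl, hi2,
      if_pos (by omega : 1 ≤ i 1), hdown, hCval] at h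
    have hq : (a i : ℚ) = ((m:ℚ) + 2) * ((-1) ^ (m + 2) * ((m+2).factorial : ℚ))
        - ((m:ℚ) + 3) * (a (Finsupp.single 1 m + Finsupp.single 3 1) : ℚ) := by
      rw [h]; push_cast; ring
    rw [hq, ih]
    have hsum : ∑ p ∈ Finset.Icc 1 (m + 3), ((p : ℚ) - 1) / (p : ℚ)
        = (∑ p ∈ Finset.Icc 1 (m + 2), ((p : ℚ) - 1) / (p : ℚ))
          + (((m:ℚ) + 3) - 1) / ((m:ℚ) + 3) := by
      rw [show m + 3 = (m + 2) + 1 from rfl, Finset.sum_Icc_succ_top (by omega)]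
      push_cast; ring
    rw [hsum]
    have hfac : ((m + 3).factorial : ℚ) = ((m:ℚ) + 3) * ((m + 2).factorial : ℚ) := by
      rw [show m + 3 = (m + 2) + 1 from rfl, Nat.factorial_succ]; push_cast; ring
    have hsgn : ((-1 : ℚ)) ^ (m + 4) = (-1) ^ (m + 2) := by
      rw [show m + 4 = (m + 2) + 2 from rfl, pow_add]; norm_num
    have hsgn3 : ((-1 : ℚ)) ^ (m + 3) = -(-1) ^ (m + 2) := by
      rw [show m + 3 = (m + 2) + 1 from rfl, pow_succ]; ring
    rw [hfac, hsgn, hsgn3]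
    have h3 : ((m:ℚ) + 3) ≠ 0 := by positivity
    field_simp
    ring
end

section
/- With the coefficients a defined by the recursion a_{0,...,0,1} = -1 and a_{i_1,...,i_n} = Σ_{j≥2, i_j≥1}(i_{j-1}+1) a_{i_1,...,i_{j-1}+1,i_j-1,...,i_{n-1}} - (n-1)[i_1≥1] a_{i_1-1,...,i_{n-1}} for i_n = 0: for all n ≥ 4, a_{n-4,2,0,...,0} = (-1)^n (n-1)! Σ_{1 ≤ p ≤ n-1} (p-2)(p-1)/p. -/
private lemma e_addB (k : ℕ) :
    Finsupp.single 1 k + Finsupp.single 2 1 + Finsupp.single 1 1 - Finsupp.single 2 1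
      = Finsupp.single 1 (k+1) := by
  ext x
  simp only [Finsupp.coe_add, Finsupp.coe_tsub, Pi.add_apply, Pi.sub_apply,
    Finsupp.single_apply]
  split_ifs <;> omega

private lemma e_addC (k : ℕ) :
    Finsupp.single 1 k + Finsupp.single 2 2 + Finsupp.single 1 1 - Finsupp.single 2 1
      = Finsupp.single 1 (k+1) + Finsupp.single 2 1 := by
  ext x
  simp only [Finsupp.coe_add, Finsupp.coe_tsub, Pi.add_apply, Pi.sub_apply,
    Finsupp.single_apply]
  split_ifs <;> omega

private lemma e_subB (k : ℕ) :
    Finsupp.single 1 (k+1) + Finsupp.single 2 1 - Finsupp.single 1 1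
      = Finsupp.single 1 k + Finsupp.single 2 1 := by
  ext x
  simp only [Finsupp.coe_add, Finsupp.coe_tsub, Pi.add_apply, Pi.sub_apply,
    Finsupp.single_apply]
  split_ifs <;> omega

private lemma e_subC (k : ℕ) :
    Finsupp.single 1 (k+1) + Finsupp.single 2 2 - Finsupp.single 1 1
      = Finsupp.single 1 k + Finsupp.single 2 2 := by
  ext x
  simp only [Finsupp.coe_add, Finsupp.coe_tsub, Pi.add_apply, Pi.sub_apply,
    Finsupp.single_apply]
  split_ifs <;> omega

private lemma esub1 (k : ℕ) :
    Finsupp.single 1 (k+1) - Finsupp.single (1:ℕ) 1 = Finsupp.single 1 k := by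
  ext x
  simp only [Finsupp.coe_tsub, Pi.sub_apply, Finsupp.single_apply]
  split_ifs <;> omega

private lemma supp12 (k c : ℕ) :
    (Finsupp.single 1 (k+1) + Finsupp.single 2 (c+1)).support = {1, 2} := by
  ext x
  simp only [Finsupp.mem_support_iff, Finsupp.coe_add, Pi.add_apply, Finsupp.single_apply,
    Finset.mem_insert, Finset.mem_singleton]
  rcases x with _|_|_|x <;> simp

private lemma supp02 (c : ℕ) :
    (Finsupp.single 1 0 + Finsupp.single 2 (c+1)).support = {2} := by
  ext x
  simp only [Finsupp.mem_support_iff, Finsupp.coe_add, Pi.add_apply, Finsupp.single_apply,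
    Finset.mem_singleton]
  rcases x with _|_|_|x <;> simp

private lemma app0 (k c : ℕ) :
    (Finsupp.single 1 k + Finsupp.single 2 c : ℕ →₀ ℕ) 0 = 0 := by
  simp only [Finsupp.coe_add, Pi.add_apply, Finsupp.single_apply]
  norm_num

private lemma app1 (k c : ℕ) :
    (Finsupp.single 1 k + Finsupp.single 2 c : ℕ →₀ ℕ) 1 = k := by
  simp only [Finsupp.coe_add, Pi.add_apply, Finsupp.single_apply]
  norm_num

private lemma app2 (k c : ℕ) :
    (Finsupp.single 1 k + Finsupp.single 2 c : ℕ →₀ ℕ) 2 = c := by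
  simp only [Finsupp.coe_add, Pi.add_apply, Finsupp.single_apply]
  norm_num

private lemma appout (k c x : ℕ) (hx : 3 ≤ x) :
    (Finsupp.single 1 k + Finsupp.single 2 c : ℕ →₀ ℕ) x = 0 := by
  simp only [Finsupp.coe_add, Pi.add_apply, Finsupp.single_apply]
  rw [if_neg (by omega), if_neg (by omega)]
  rfl

/-- With the coefficients `a` defined by the stated recursion: for all `n ≥ 4`,
`a_{n-4,2,0,…,0} = (-1)^n (n-1)! Σ_{1 ≤ p ≤ n-1} (p-2)(p-1)/p`. -/
theorem coeff_a_second_squared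
    (a : (ℕ →₀ ℕ) → ℤ)
    (hbase : ∀ n : ℕ, 1 ≤ n → a (Finsupp.single n 1) = -1)
    (hrec : ∀ n : ℕ, 1 ≤ n → ∀ i : ℕ →₀ ℕ, i 0 = 0 →
      (∑ k ∈ i.support, k * i k) = n → i n = 0 →
      a i = (∑ j ∈ i.support.filter fun j => 2 ≤ j,
              ((i (j - 1) : ℤ) + 1) * a (i + Finsupp.single (j - 1) 1 - Finsupp.single j 1))
        - ((n : ℤ) - 1) * (if 1 ≤ i 1 then a (i - Finsupp.single 1 1) else 0)) :
    ∀ n : ℕ, 4 ≤ n →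
      (a (Finsupp.single 1 (n - 4) + Finsupp.single 2 2) : ℚ)
        = (-1) ^ n * ((n - 1).factorial : ℚ)
            * ∑ p ∈ Finset.Icc 1 (n - 1), ((p : ℚ) - 2) * ((p : ℚ) - 1) / (p : ℚ) := by
  -- Step 1 : a (single 1 (m+1)) = (-1)^(m+1) m!
  have aA : ∀ m : ℕ, a (Finsupp.single 1 (m+1)) = (-1)^(m+1) * (m.factorial : ℤ) := by
    intro m
    induction m with
    | zero => simpa using hbase 1 le_rfl
    | succ m ih =>
      have hsupp : (Finsupp.single 1 (m+2) : ℕ →₀ ℕ).support = {1} :=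
        Finsupp.support_single_ne_zero 1 (by omega)
      have h := hrec (m+2) (by omega) (Finsupp.single 1 (m+2))
        (by simp [Finsupp.single_apply])
        (by rw [hsupp]; simp)
        (by simp [Finsupp.single_apply])
      rw [hsupp] at h
      rw [show Finset.filter (fun j => 2 ≤ j) ({1} : Finset ℕ) = ∅ from by decide] at h
      simp only [Finset.sum_empty, Finsupp.single_eq_same] at h
      rw [if_pos (by omega), esub1, ih] at h
      rw [h, Nat.factorial_succ]
      push_cast
      ring
  -- Step 2 : a (single 1 m + single 2 1) = (-1)^(m+3) (m+1)! (m+1)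
  have aB : ∀ m : ℕ, a (Finsupp.single 1 m + Finsupp.single 2 1)
      = (-1)^(m+3) * ((m+1).factorial : ℤ) * (m+1) := by
    intro m
    induction m with
    | zero => simpa using hbase 2 (by omega)
    | succ m ih =>
      have hsupp : (Finsupp.single 1 (m+1) + Finsupp.single 2 1 : ℕ →₀ ℕ).support = {1, 2} :=
        supp12 m 0
      have h := hrec (m+3) (by omega) (Finsupp.single 1 (m+1) + Finsupp.single 2 1)
        (app0 _ _)
        (by rw [hsupp, Finset.sum_insert (by decide), Finset.sum_singleton, app1, app2]; omega)
        (appout _ _ _ (by omega))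
      rw [hsupp,
        show Finset.filter (fun j => 2 ≤ j) ({1, 2} : Finset ℕ) = {2} from by decide,
        Finset.sum_singleton] at h
      simp only [show (2:ℕ) - 1 = 1 from rfl, app1] at h
      rw [if_pos (by omega), e_addB (m+1), e_subB m, aA (m+1), ih] at h
      rw [h, Nat.factorial_succ (m+1)]
      push_cast
      ring
  -- Step 3 : the main statement
  intro n hn
  obtain ⟨m, rfl⟩ : ∃ m, n = m + 4 := ⟨n - 4, by omega⟩
  simp only [Nat.add_sub_cancel, show m + 4 - 1 = m + 3 from rfl]
  clear hn
  induction m with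
  | zero =>
    have hsupp : (Finsupp.single 1 0 + Finsupp.single 2 2 : ℕ →₀ ℕ).support = {2} :=
      supp02 1
    have h := hrec 4 (by omega) (Finsupp.single 1 0 + Finsupp.single 2 2)
      (app0 _ _)
      (by rw [hsupp, Finset.sum_singleton, app2])
      (appout _ _ _ (by omega))
    rw [hsupp,
      show Finset.filter (fun j => 2 ≤ j) ({2} : Finset ℕ) = {2} from by decide,
      Finset.sum_singleton] at h
    simp only [show (2:ℕ) - 1 = 1 from rfl, app1] at h
    rw [if_neg (by omega), mul_zero, sub_zero, e_addC 0, aB 1] at h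
    rw [h]
    rw [show Finset.Icc 1 (0+3) = ({1, 2, 3} : Finset ℕ) from by decide]
    rw [Finset.sum_insert (by decide), Finset.sum_insert (by decide), Finset.sum_singleton]
    norm_num [Nat.factorial]
  | succ m ih =>
    have hsupp : (Finsupp.single 1 (m+1) + Finsupp.single 2 2 : ℕ →₀ ℕ).support = {1, 2} :=
      supp12 m 1
    have h := hrec (m+5) (by omega) (Finsupp.single 1 (m+1) + Finsupp.single 2 2)
      (app0 _ _)
      (by rw [hsupp, Finset.sum_insert (by decide), Finset.sum_singleton, app1, app2]; omega)
      (appout _ _ _ (by omega))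
    rw [hsupp,
      show Finset.filter (fun j => 2 ≤ j) ({1, 2} : Finset ℕ) = {2} from by decide,
      Finset.sum_singleton] at h
    simp only [show (2:ℕ) - 1 = 1 from rfl, app1] at h
    rw [if_pos (by omega), e_addC (m+1), e_subC m, aB (m+2)] at h
    rw [h]
    push_cast
    rw [ih]
    have hsum : ∑ p ∈ Finset.Icc 1 (m+1+3), ((p : ℚ) - 2) * ((p : ℚ) - 1) / (p : ℚ)
        = (∑ p ∈ Finset.Icc 1 (m+3), ((p : ℚ) - 2) * ((p : ℚ) - 1) / (p : ℚ))
          + (((m:ℚ)+4) - 2) * (((m:ℚ)+4) - 1) / ((m:ℚ)+4) := by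
      rw [show m+1+3 = (m+3)+1 from rfl, Finset.sum_Icc_succ_top (by omega),
        show ((m+3+1 : ℕ) : ℚ) = (m:ℚ)+4 from by push_cast; ring]
    rw [hsum]
    have hfac : (((m+1)+3).factorial : ℚ) = ((m:ℚ)+4) * ((m+3).factorial : ℚ) := by
      rw [show (m+1)+3 = (m+3)+1 from rfl, Nat.factorial_succ]
      push_cast; ring
    rw [hfac]
    have hm4 : ((m : ℚ) + 4) ≠ 0 := by positivity
    field_simp
    ring
end

section
/- Define polynomials P indexed by dominant sequences (i_2,...,i_n) of weight ≥ 1 by: P_{(1)} = X_1, P_{(2)} = (X_1-2)(X_1-1), P_{(0,1)} = X_1 - 1, and for weight ≥ 3, P_{i_2,...,i_n} = Σ_{j≥3, i_j≥1}(i_{j-1}+1) P_{∂(i_2,...,i_{j-1}+1,i_j-1,...,i_n)} + [i_2≥1](X_N - 2i_2 - ... - n i_n + 2) P_{∂(i_2-1,i_3,...,i_n)}, where N = ω(i_2,...,i_n). Then for every dominant sequence (i_2,...,i_n) of weight ≥ 1, the total degree of P_{i_2,...,i_n} equals i_2 + ... + i_n. -/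
open MvPolynomial


private lemma sumc_add (c : ℕ → ℕ) (f g : ℕ →₀ ℕ) :
    (∑ k ∈ (f + g).support, c k * (f + g) k)
      = (∑ k ∈ f.support, c k * f k) + ∑ k ∈ g.support, c k * g k :=
  Finsupp.sum_add_index' (fun _ => mul_zero _) (fun _ b₁ b₂ => mul_add _ _ _)

private lemma sumc_single (c : ℕ → ℕ) (a b : ℕ) :
    (∑ k ∈ (Finsupp.single a b).support, c k * (Finsupp.single a b) k) = c a * b :=
  Finsupp.sum_single_index (mul_zero _)

private lemma sumc_sub (c : ℕ → ℕ) {f g : ℕ →₀ ℕ} (h : g ≤ f) :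
    (∑ k ∈ (f - g).support, c k * (f - g) k) + (∑ k ∈ g.support, c k * g k)
      = ∑ k ∈ f.support, c k * f k := by
  rw [← sumc_add, tsub_add_cancel_of_le h]

private lemma sumw_single (a b : ℕ) :
    (∑ k ∈ (Finsupp.single a b).support, (k - 1) * (Finsupp.single a b : ℕ →₀ ℕ) k)
      = (a - 1) * b := sumc_single _ a b

private lemma sumw_sub (f g : ℕ →₀ ℕ) (h : g ≤ f) :
    (∑ k ∈ (f - g).support, (k - 1) * (f - g : ℕ →₀ ℕ) k)
        + (∑ k ∈ g.support, (k - 1) * (g : ℕ →₀ ℕ) k)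
      = ∑ k ∈ f.support, (k - 1) * f k := sumc_sub (fun k => k - 1) h

private lemma deg_add (f g : ℕ →₀ ℕ) :
    ((f + g).sum fun _ e => e) = (f.sum fun _ e => e) + (g.sum fun _ e => e) :=
  Finsupp.sum_add_index' (fun _ => rfl) (fun _ _ _ => rfl)

private lemma deg_single (a b : ℕ) :
    ((Finsupp.single a b).sum fun _ e => e) = b :=
  Finsupp.sum_single_index rfl

private lemma deg_sub {f g : ℕ →₀ ℕ} (h : g ≤ f) :
    ((f - g).sum fun _ e => e) + (g.sum fun _ e => e) = f.sum fun _ e => e := by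
  rw [← deg_add, tsub_add_cancel_of_le h]

private lemma deg_eq_sum (f : ℕ →₀ ℕ) : (f.sum fun _ e => e) = ∑ k ∈ f.support, f k := rfl

private lemma classify (i : ℕ →₀ ℕ) (h0 : i 0 = 0) (h1 : i 1 = 0)
    (hs : ∑ k ∈ i.support, (k - 1) * i k = 2) :
    i = Finsupp.single 2 2 ∨ i = Finsupp.single 3 1 := by
  have hk2 : ∀ k ∈ i.support, 2 ≤ k := by
    intro k hk
    rcases Nat.lt_or_ge k 2 with h | h
    · interval_cases k <;> simp_all [Finsupp.mem_support_iff]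
    · exact h
  have hsub : i.support ⊆ ({2, 3} : Finset ℕ) := by
    intro k hk
    have h2 := hk2 k hk
    have hik : 1 ≤ i k := Nat.one_le_iff_ne_zero.2 (Finsupp.mem_support_iff.1 hk)
    have hterm : (k - 1) * i k ≤ 2 :=
      hs ▸ Finset.single_le_sum (f := fun k => (k - 1) * i k) (fun _ _ => Nat.zero_le _) hk
    have hk1 : k - 1 ≤ 2 := le_trans (Nat.le_mul_of_pos_right _ hik) hterm
    simp only [Finset.mem_insert, Finset.mem_singleton]
    omega
  have hout : ∀ k, k ≠ 2 → k ≠ 3 → i k = 0 := by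
    intro k hk2' hk3'
    by_contra h
    have hm : k ∈ i.support := Finsupp.mem_support_iff.2 h
    have := hsub hm
    simp only [Finset.mem_insert, Finset.mem_singleton] at this
    omega
  have hsum : i 2 + 2 * i 3 = 2 := by
    rw [Finset.sum_subset hsub (fun x _ hx => by
      simp [Finsupp.notMem_support_iff.1 hx])] at hs
    simp [Finset.sum_insert, Finset.sum_singleton] at hs
    omega
  rcases Nat.le_one_iff_eq_zero_or_eq_one.1 (show i 3 ≤ 1 by omega) with h3 | h3
  · left
    have h2 : i 2 = 2 := by omega
    ext k
    by_cases hk : k = 2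
    · subst hk; simp [h2, Finsupp.single_apply]
    · by_cases hk3 : k = 3
      · subst hk3; simp [h3, Finsupp.single_apply]
      · rw [hout k hk hk3, Finsupp.single_apply, if_neg (by omega)]
  · right
    have h2 : i 2 = 0 := by omega
    ext k
    by_cases hk : k = 3
    · subst hk; simp [h3, Finsupp.single_apply]
    · by_cases hk2' : k = 2
      · subst hk2'; simp [h2, Finsupp.single_apply]
      · rw [hout k hk2' hk, Finsupp.single_apply, if_neg (by omega)]


private lemma deg_single' (a b : ℕ) :
    ((Finsupp.single a b).sum fun (_ : ℕ) (e : ℕ) => e) = b :=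
  Finsupp.sum_single_index rfl

private lemma tdeg_X_sub_C (a : ℕ) (c : ℤ) : (X a - C c : MvPolynomial ℕ ℤ).totalDegree ≤ 1 := by
  have h : (X a - C c : MvPolynomial ℕ ℤ) = X a + C (-c) := by rw [map_neg]; ring
  rw [h]
  exact le_trans (totalDegree_add _ _) (max_le (le_of_eq (totalDegree_X a))
    (le_trans (le_of_eq (totalDegree_C (-c))) (by norm_num)))

private lemma base22 :
    ((X 1 - C 2) * (X 1 - C 1) : MvPolynomial ℕ ℤ).totalDegree ≤ 2 ∧
    (∀ m : ℕ →₀ ℕ, (m.sum fun _ e => e) = 2 →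
      0 ≤ coeff m ((X 1 - C 2) * (X 1 - C 1) : MvPolynomial ℕ ℤ)) ∧
    (∃ m : ℕ →₀ ℕ, (m.sum fun _ e => e) = 2 ∧
      0 < coeff m ((X 1 - C 2) * (X 1 - C 1) : MvPolynomial ℕ ℤ)) := by
  have hexp : ((X 1 - C 2) * (X 1 - C 1) : MvPolynomial ℕ ℤ) = X 1 ^ 2 - C 3 * X 1 + C 2 := by
    simp only [map_ofNat, C_1]; ring
  refine ⟨le_trans (totalDegree_mul _ _)
      (le_trans (add_le_add (tdeg_X_sub_C 1 2) (tdeg_X_sub_C 1 1)) (by norm_num)), ?_, ?_⟩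
  · intro m hm
    rw [hexp, coeff_add, coeff_sub, X_pow_eq_monomial, coeff_monomial, coeff_C_mul, coeff_X',
      coeff_C]
    have h1 : ¬ (Finsupp.single 1 1 = m) := fun h => by simp [← h, deg_single'] at hm
    have h0 : ¬ (m = 0) := fun h => by simp [h] at hm
    rw [if_neg h1]
    split_ifs <;> norm_num
  · refine ⟨Finsupp.single 1 2, deg_single' _ _, ?_⟩
    rw [hexp, coeff_add, coeff_sub, X_pow_eq_monomial, coeff_monomial, coeff_C_mul, coeff_X',
      coeff_C]
    have h1 : ¬ (Finsupp.single 1 1 = Finsupp.single 1 2) := fun h => by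
      have := DFunLike.congr_fun h 1; simp at this
    have h0 : ¬ (Finsupp.single 1 2 = (0 : ℕ →₀ ℕ)) := fun h => by
      have := DFunLike.congr_fun h 1; simp at this
    rw [if_pos rfl, if_neg h1]
    split_ifs <;> norm_num

private lemma base31 :
    ((X 1 - C 1) : MvPolynomial ℕ ℤ).totalDegree ≤ 1 ∧
    (∀ m : ℕ →₀ ℕ, (m.sum fun _ e => e) = 1 →
      0 ≤ coeff m ((X 1 - C 1) : MvPolynomial ℕ ℤ)) ∧
    (∃ m : ℕ →₀ ℕ, (m.sum fun _ e => e) = 1 ∧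
      0 < coeff m ((X 1 - C 1) : MvPolynomial ℕ ℤ)) := by
  refine ⟨tdeg_X_sub_C 1 1, ?_, ?_⟩
  · intro m hm
    rw [coeff_sub, coeff_X', coeff_C]
    have h0 : ¬ (m = 0) := fun h => by simp [h] at hm
    split_ifs with hA hB hB <;> try norm_num
    all_goals (exfalso; rw [← hB] at hm; simp at hm)
  · refine ⟨Finsupp.single 1 1, deg_single' _ _, ?_⟩
    rw [coeff_sub, coeff_X', coeff_C]
    have h0 : ¬ (Finsupp.single 1 1 = (0 : ℕ →₀ ℕ)) := fun h => by
      have := DFunLike.congr_fun h 1; simp at this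
    rw [if_pos rfl]
    split_ifs with h
    · exfalso; have := DFunLike.congr_fun h 1; simp at this
    · norm_num

/-- Let `P` be the polynomials indexed by dominant sequences `(i_2,…,i_n)` (encoded as
finitely supported functions `i : ℕ →₀ ℕ` vanishing at `0` and `1`, `i k` being the
multiplicity `i_k`; trailing zeros are automatically absent, so the truncation `∂` is the
identity in this encoding), of weight `ω = Σ_{k ≥ 2} (k-1) i_k - 1`, defined by
`P_{(1)} = X_1`, `P_{(2)} = (X_1-2)(X_1-1)`, `P_{(0,1)} = X_1-1` and, for weight `≥ 2`,
`P_{i_2,…,i_n} = Σ_{j ≥ 3, i_j ≥ 1} (i_{j-1}+1) P_{∂(i_2,…,i_{j-1}+1,i_j-1,…,i_n)}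
  + [i_2 ≥ 1](X_ω - 2i_2 - … - n i_n + 2) P_{∂(i_2-1,i_3,…,i_n)}`.
Then for every dominant sequence of weight `≥ 1`, the total degree of `P_{i_2,…,i_n}`
equals `i_2 + … + i_n`. -/
theorem poly_P_totalDegree
    (P : (ℕ →₀ ℕ) → MvPolynomial ℕ ℤ)
    (hP1 : P (Finsupp.single 2 1) = X 1)
    (hP2 : P (Finsupp.single 2 2) = (X 1 - C 2) * (X 1 - C 1))
    (hP01 : P (Finsupp.single 3 1) = X 1 - C 1)
    (hPrec : ∀ i : ℕ →₀ ℕ, i 0 = 0 → i 1 = 0 →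
      2 ≤ (∑ k ∈ i.support, (k - 1) * i k) - 1 →
      P i = (∑ j ∈ i.support.filter fun j => 3 ≤ j,
              C ((i (j - 1) : ℤ) + 1)
                * P (i + Finsupp.single (j - 1) 1 - Finsupp.single j 1))
        + (if 1 ≤ i 2 then
            (X ((∑ k ∈ i.support, (k - 1) * i k) - 1)
                - C (((∑ k ∈ i.support, k * i k : ℕ) : ℤ) - 2))
              * P (i - Finsupp.single 2 1)
          else 0)) :
    ∀ i : ℕ →₀ ℕ, i 0 = 0 → i 1 = 0 →
      1 ≤ (∑ k ∈ i.support, (k - 1) * i k) - 1 →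
      (P i).totalDegree = ∑ k ∈ i.support, i k := by
  suffices aux : ∀ n : ℕ, ∀ i : ℕ →₀ ℕ, (∑ k ∈ i.support, (k - 1) * i k) = n →
      i 0 = 0 → i 1 = 0 → 2 ≤ n →
      (P i).totalDegree ≤ (∑ k ∈ i.support, i k) ∧
      (∀ m : ℕ →₀ ℕ, (m.sum fun _ e => e) = (∑ k ∈ i.support, i k) → 0 ≤ coeff m (P i)) ∧
      (∃ m : ℕ →₀ ℕ, (m.sum fun _ e => e) = (∑ k ∈ i.support, i k) ∧ 0 < coeff m (P i)) by
    intro i h0 h1 hw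
    obtain ⟨hle, -, m, hm, hc⟩ := aux _ i rfl h0 h1 (by omega)
    refine le_antisymm hle ?_
    rw [← hm]
    exact le_totalDegree (by simpa [MvPolynomial.mem_support_iff] using hc.ne')
  intro n
  induction n using Nat.strong_induction_on with
  | _ n IH =>
  intro i hW h0 h1 hn
  rcases eq_or_lt_of_le hn with h2 | h3
  · -- base case n = 2
    rcases classify i h0 h1 (hW.trans h2.symm) with hi | hi
    · subst hi
      have hd : (∑ k ∈ (Finsupp.single 2 2 : ℕ →₀ ℕ).support, (Finsupp.single 2 2 : ℕ →₀ ℕ) k)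
          = 2 := (deg_eq_sum _).symm.trans (deg_single' 2 2)
      rw [hd, hP2]
      exact base22
    · subst hi
      have hd : (∑ k ∈ (Finsupp.single 3 1 : ℕ →₀ ℕ).support, (Finsupp.single 3 1 : ℕ →₀ ℕ) k)
          = 1 := (deg_eq_sum _).symm.trans (deg_single' 3 1)
      rw [hd, hP01]
      exact base31
  · -- recursive case n ≥ 3
    have hrec := hPrec i h0 h1 (by rw [hW]; omega)
    rw [hW] at hrec
    have hdeq : (i.sum fun _ e => e) = ∑ k ∈ i.support, i k := deg_eq_sum i
    -- facts and induction hypothesis for the summand indices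
    have hIH : ∀ j ∈ i.support.filter (fun j => 3 ≤ j),
        (P (i + Finsupp.single (j - 1) 1 - Finsupp.single j 1)).totalDegree
            ≤ (∑ k ∈ i.support, i k) ∧
        (∀ m : ℕ →₀ ℕ, (m.sum fun _ e => e) = (∑ k ∈ i.support, i k) →
          0 ≤ coeff m (P (i + Finsupp.single (j - 1) 1 - Finsupp.single j 1))) ∧
        (∃ m : ℕ →₀ ℕ, (m.sum fun _ e => e) = (∑ k ∈ i.support, i k) ∧
          0 < coeff m (P (i + Finsupp.single (j - 1) 1 - Finsupp.single j 1))) := by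
      intro j hj
      rw [Finset.mem_filter] at hj
      obtain ⟨hjs, hj3⟩ := hj
      have hij : 1 ≤ i j := Nat.one_le_iff_ne_zero.2 (Finsupp.mem_support_iff.1 hjs)
      have hle : Finsupp.single j 1 ≤ i + Finsupp.single (j - 1) 1 := by
        rw [Finsupp.single_le_iff, Finsupp.add_apply]
        omega
      have hcan : (i + Finsupp.single (j - 1) 1 - Finsupp.single j 1) + Finsupp.single j 1
          = i + Finsupp.single (j - 1) 1 := tsub_add_cancel_of_le hle
      have hW' := congrArg (fun f : ℕ →₀ ℕ => ∑ k ∈ f.support, (k - 1) * f k) hcan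
      simp only [sumc_add, sumc_single, hW, mul_one] at hW'
      have hD' := congrArg (fun f : ℕ →₀ ℕ => f.sum fun _ e => e) hcan
      simp only [deg_add, deg_single'] at hD'
      have e1 : j - 1 ≠ 0 := by omega
      have e2 : j ≠ 0 := by omega
      have e3 : j - 1 ≠ 1 := by omega
      have e4 : j ≠ 1 := by omega
      have h0' : (i + Finsupp.single (j - 1) 1 - Finsupp.single j 1 : ℕ →₀ ℕ) 0 = 0 := by
        simp [Finsupp.tsub_apply, Finsupp.add_apply, Finsupp.single_apply, h0, e1, e2]
      have h1' : (i + Finsupp.single (j - 1) 1 - Finsupp.single j 1 : ℕ →₀ ℕ) 1 = 0 := by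
        simp [Finsupp.tsub_apply, Finsupp.add_apply, Finsupp.single_apply, h1, e3, e4]
      obtain ⟨a, b, c⟩ := IH (n - 1) (by omega) _ (by omega) h0' h1' (by omega)
      have hd' : (∑ k ∈ (i + Finsupp.single (j - 1) 1 - Finsupp.single j 1).support,
          (i + Finsupp.single (j - 1) 1 - Finsupp.single j 1 : ℕ →₀ ℕ) k)
          = ∑ k ∈ i.support, i k := by
        rw [← deg_eq_sum]
        omega
      rw [hd'] at a b c
      exact ⟨a, b, c⟩
    have hSdeg : (∑ j ∈ i.support.filter fun j => 3 ≤ j,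
        C ((i (j - 1) : ℤ) + 1)
          * P (i + Finsupp.single (j - 1) 1 - Finsupp.single j 1)).totalDegree
        ≤ ∑ k ∈ i.support, i k :=
      totalDegree_finsetSum_le fun j hj => le_trans (totalDegree_mul _ _)
        (by rw [totalDegree_C, zero_add]; exact (hIH j hj).1)
    have hSco : ∀ m : ℕ →₀ ℕ, (m.sum fun _ e => e) = (∑ k ∈ i.support, i k) →
        0 ≤ coeff m (∑ j ∈ i.support.filter fun j => 3 ≤ j,
          C ((i (j - 1) : ℤ) + 1)
            * P (i + Finsupp.single (j - 1) 1 - Finsupp.single j 1)) := by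
      intro m hm
      rw [coeff_sum]
      exact Finset.sum_nonneg fun j hj => by
        rw [coeff_C_mul]
        exact mul_nonneg (by positivity) ((hIH j hj).2.1 m hm)
    by_cases h2i : 1 ≤ i 2
    · -- i 2 ≥ 1
      rw [if_pos h2i] at hrec
      have hle2 : Finsupp.single 2 1 ≤ i := Finsupp.single_le_iff.2 h2i
      have hW2 : (∑ k ∈ (i - Finsupp.single 2 1).support,
          (k - 1) * (i - Finsupp.single 2 1 : ℕ →₀ ℕ) k) + 1 = n := by
        have h := sumw_sub i (Finsupp.single 2 1) hle2
        rw [sumw_single, hW] at h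
        omega
      have hD2 := deg_sub hle2
      rw [deg_single'] at hD2
      have hd1 : 1 ≤ ∑ k ∈ i.support, i k :=
        le_trans h2i (Finset.single_le_sum (f := fun k => i k) (fun _ _ => Nat.zero_le _)
          (Finsupp.mem_support_iff.2 (by omega)))
      have h0'' : (i - Finsupp.single 2 1 : ℕ →₀ ℕ) 0 = 0 := by
        simp [Finsupp.tsub_apply, Finsupp.single_apply, h0]
      have h1'' : (i - Finsupp.single 2 1 : ℕ →₀ ℕ) 1 = 0 := by
        simp [Finsupp.tsub_apply, Finsupp.single_apply, h1]
      obtain ⟨a2, b2, c2⟩ := IH (n - 1) (by omega) _ (by omega) h0'' h1'' (by omega)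
      have hd2 : (∑ k ∈ (i - Finsupp.single 2 1).support, (i - Finsupp.single 2 1 : ℕ →₀ ℕ) k)
          = (∑ k ∈ i.support, i k) - 1 := by
        rw [← deg_eq_sum]
        omega
      rw [hd2] at a2 b2 c2
      refine ⟨?_, ?_, ?_⟩
      · rw [hrec]
        refine le_trans (totalDegree_add _ _) (max_le hSdeg ?_)
        refine le_trans (totalDegree_mul _ _) ?_
        have := tdeg_X_sub_C (n - 1) (((∑ k ∈ i.support, k * i k : ℕ) : ℤ) - 2)
        omega
      · intro m hm
        rw [hrec, coeff_add]
        refine add_nonneg (hSco m hm) ?_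
        rw [sub_mul, coeff_sub, coeff_X_mul', coeff_C_mul]
        have hQ0 : coeff m (P (i - Finsupp.single 2 1)) = 0 :=
          coeff_eq_zero_of_totalDegree_lt (by rw [← deg_eq_sum, hm]; omega)
        rw [hQ0, mul_zero, sub_zero]
        split_ifs with hmem
        · have hsle : Finsupp.single (n - 1) 1 ≤ m :=
            Finsupp.single_le_iff.2 (Nat.one_le_iff_ne_zero.2 (Finsupp.mem_support_iff.1 hmem))
          have hds := deg_sub hsle
          rw [deg_single'] at hds
          exact b2 _ (by omega)
        · exact le_refl 0
      · obtain ⟨m0, hm0, hc0⟩ := c2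
        refine ⟨Finsupp.single (n - 1) 1 + m0, ?_, ?_⟩
        · rw [deg_add, deg_single']
          omega
        · rw [hrec, coeff_add]
          have hS := hSco (Finsupp.single (n - 1) 1 + m0) (by rw [deg_add, deg_single']; omega)
          rw [sub_mul, coeff_sub, coeff_C_mul, coeff_X_mul]
          have hQ0 : coeff (Finsupp.single (n - 1) 1 + m0) (P (i - Finsupp.single 2 1)) = 0 :=
            coeff_eq_zero_of_totalDegree_lt (by rw [← deg_eq_sum, deg_add, deg_single']; omega)
          rw [hQ0, mul_zero, sub_zero]
          linarith
    · -- i 2 = 0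
      rw [if_neg h2i, add_zero] at hrec
      have hne : i.support.Nonempty := by
        rcases Finset.eq_empty_or_nonempty i.support with he | hne
        · rw [he, Finset.sum_empty] at hW; omega
        · exact hne
      obtain ⟨j0, hj0⟩ := hne
      have hj0ne : i j0 ≠ 0 := Finsupp.mem_support_iff.1 hj0
      have hj03 : 3 ≤ j0 := by
        have e0 : j0 ≠ 0 := fun h => hj0ne (h ▸ h0)
        have e1 : j0 ≠ 1 := fun h => hj0ne (h ▸ h1)
        have e2 : j0 ≠ 2 := fun h => hj0ne (h ▸ (by omega : i 2 = 0))
        omega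
      have hj0f : j0 ∈ i.support.filter (fun j => 3 ≤ j) := Finset.mem_filter.2 ⟨hj0, hj03⟩
      refine ⟨?_, ?_, ?_⟩
      · rw [hrec]; exact hSdeg
      · intro m hm; rw [hrec]; exact hSco m hm
      · obtain ⟨m0, hm0, hc0⟩ := (hIH j0 hj0f).2.2
        refine ⟨m0, hm0, ?_⟩
        rw [hrec, coeff_sum]
        refine Finset.sum_pos' (fun j hj => ?_) ⟨j0, hj0f, ?_⟩
        · rw [coeff_C_mul]
          exact mul_nonneg (by positivity) ((hIH j hj).2.1 m0 hm0)
        · rw [coeff_C_mul]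
          exact mul_pos (by positivity) hc0
end

section
/- With the polynomials P defined by the recursion (P_{(2)} = (X_1-2)(X_1-1), P_{(0,1)} = X_1-1, and the inductive formula for weight ≥ 3), every P_{i_2,...,i_n} for a dominant sequence of weight ≥ 1 is divisible by X_1 - 1 in ℤ[X_1,...,X_N], except the base case P_{(1)} = X_1. -/
open MvPolynomial

private def wgt (i : ℕ →₀ ℕ) : ℕ := ∑ k ∈ i.support, (k - 1) * i k

private lemma wgt_eq_sum (i : ℕ →₀ ℕ) : wgt i = i.sum (fun k v => (k - 1) * v) := rfl

private lemma wgt_add (a b : ℕ →₀ ℕ) : wgt (a + b) = wgt a + wgt b := by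
  simp only [wgt_eq_sum]
  exact Finsupp.sum_add_index' (fun k => by simp) (fun k v w => by ring)

private lemma wgt_single (j m : ℕ) : wgt (Finsupp.single j m) = (j - 1) * m := by
  rw [wgt_eq_sum, Finsupp.sum_single_index]; simp

private lemma term_le_wgt (i : ℕ →₀ ℕ) (k : ℕ) (hk : k ∈ i.support) :
    (k - 1) * i k ≤ wgt i :=
  Finset.single_le_sum (f := fun k => (k - 1) * i k) (fun _ _ => Nat.zero_le _) hk

private lemma wgt_two (i : ℕ →₀ ℕ) (h0 : i 0 = 0) (h1 : i 1 = 0) (h : wgt i = 2) :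
    i = Finsupp.single 2 2 ∨ i = Finsupp.single 3 1 := by
  have hk : ∀ k, 4 ≤ k → i k = 0 := by
    intro k hk4
    by_contra hne
    have hmem : k ∈ i.support := Finsupp.mem_support_iff.mpr hne
    have h2 := term_le_wgt i k hmem
    have hik : 1 ≤ i k := Nat.one_le_iff_ne_zero.mpr hne
    rw [h] at h2
    have h3 : k - 1 ≤ (k - 1) * i k := Nat.le_mul_of_pos_right _ hik
    omega
  have heq : i = Finsupp.single 2 (i 2) + Finsupp.single 3 (i 3) := by
    ext k
    rcases k with _ | _ | _ | _ | k
    · simp [h0]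
    · simp [h1]
    · simp [Finsupp.single_apply]
    · simp [Finsupp.single_apply]
    · have := hk (k + 4) (by omega)
      simp [Finsupp.single_apply, this]
  rw [heq, wgt_add, wgt_single, wgt_single] at h
  simp only [show (2:ℕ) - 1 = 1 from rfl, show (3:ℕ) - 1 = 2 from rfl, one_mul] at h
  rcases (by omega : (i 2 = 2 ∧ i 3 = 0) ∨ (i 2 = 0 ∧ i 3 = 1)) with ⟨h2, h3⟩ | ⟨h2, h3⟩
  · left; rw [heq, h2, h3]; simp
  · right; rw [heq, h2, h3]; simp

private lemma aux_dvd
    (P : (ℕ →₀ ℕ) → MvPolynomial ℕ ℤ)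
    (hP2 : P (Finsupp.single 2 2) = (X 1 - C 2) * (X 1 - C 1))
    (hP01 : P (Finsupp.single 3 1) = X 1 - C 1)
    (hPrec : ∀ i : ℕ →₀ ℕ, i 0 = 0 → i 1 = 0 →
      2 ≤ (∑ k ∈ i.support, (k - 1) * i k) - 1 →
      P i = (∑ j ∈ i.support.filter fun j => 3 ≤ j,
              C ((i (j - 1) : ℤ) + 1)
                * P (i + Finsupp.single (j - 1) 1 - Finsupp.single j 1))
        + (if 1 ≤ i 2 then
            (X ((∑ k ∈ i.support, (k - 1) * i k) - 1)
                - C (((∑ k ∈ i.support, k * i k : ℕ) : ℤ) - 2))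
              * P (i - Finsupp.single 2 1)
          else 0)) :
    ∀ n : ℕ, ∀ i : ℕ →₀ ℕ, i 0 = 0 → i 1 = 0 → wgt i = n → 2 ≤ n →
      (X 1 - C 1) ∣ P i := by
  intro n
  induction n using Nat.strong_induction_on with
  | _ n IH =>
    intro i h0 h1 hw hn
    rcases eq_or_lt_of_le hn with hn2 | hn3
    · rcases wgt_two i h0 h1 (by omega) with rfl | rfl
      · rw [hP2]; exact Dvd.intro_left _ rfl
      · rw [hP01]
    · rw [hPrec i h0 h1 (by show 2 ≤ wgt i - 1; omega)]
      apply dvd_add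
      · apply Finset.dvd_sum
        intro j hj
        rw [Finset.mem_filter] at hj
        obtain ⟨hjs, hj3⟩ := hj
        have hij : 1 ≤ i j := Nat.one_le_iff_ne_zero.mpr (Finsupp.mem_support_iff.mp hjs)
        set c : ℕ →₀ ℕ := i + Finsupp.single (j - 1) 1 - Finsupp.single j 1 with hc
        have hle : Finsupp.single j 1 ≤ i + Finsupp.single (j - 1) 1 := by
          rw [Finsupp.le_def]
          intro k
          simp only [Finsupp.single_apply, Finsupp.add_apply]
          rcases eq_or_ne j k with rfl | hne
          · rw [if_pos rfl]
            split_ifs <;> omega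
          · rw [if_neg hne]
            exact Nat.zero_le _
        have hcan : c + Finsupp.single j 1 = i + Finsupp.single (j - 1) 1 :=
          tsub_add_cancel_of_le hle
        have hwc : wgt c = n - 1 := by
          have := congrArg wgt hcan
          rw [wgt_add, wgt_add, wgt_single, wgt_single, hw] at this
          omega
        have hc0 : c 0 = 0 := by
          rw [hc, Finsupp.tsub_apply, Finsupp.add_apply]
          simp only [Finsupp.single_apply, h0]
          rw [if_neg (by omega : ¬ j - 1 = 0), if_neg (by omega : ¬ j = 0)]
          rfl
        have hc1 : c 1 = 0 := by
          rw [hc, Finsupp.tsub_apply, Finsupp.add_apply]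
          simp only [Finsupp.single_apply, h1]
          rw [if_neg (by omega : ¬ j - 1 = 1), if_neg (by omega : ¬ j = 1)]
          rfl
        exact dvd_mul_of_dvd_right (IH (n - 1) (by omega) c hc0 hc1 hwc (by omega)) _
      · split_ifs with h2
        · set c : ℕ →₀ ℕ := i - Finsupp.single 2 1 with hc
          have hle : Finsupp.single 2 1 ≤ i := by
            rw [Finsupp.le_def]
            intro k
            rcases eq_or_ne k 2 with rfl | hne
            · simpa [Finsupp.single_apply] using h2
            · simp [Finsupp.single_apply, Ne.symm hne]
          have hcan : c + Finsupp.single 2 1 = i := tsub_add_cancel_of_le hle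
          have hwc : wgt c = n - 1 := by
            have := congrArg wgt hcan
            rw [wgt_add, wgt_single, hw] at this
            omega
          have hc0 : c 0 = 0 := by
            rw [hc, Finsupp.tsub_apply]
            simp [Finsupp.single_apply, h0]
          have hc1 : c 1 = 0 := by
            rw [hc, Finsupp.tsub_apply]
            simp [Finsupp.single_apply, h1]
          exact dvd_mul_of_dvd_right (IH (n - 1) (by omega) c hc0 hc1 hwc (by omega)) _
        · exact dvd_zero _

/-- Let `P` be the polynomials indexed by dominant sequences `(i_2,…,i_n)` (encoded as
finitely supported functions `i : ℕ →₀ ℕ` vanishing at `0` and `1`, `i k` being the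
multiplicity `i_k`; trailing zeros are automatically absent, so the truncation `∂` is the
identity in this encoding), of weight `ω = Σ_{k ≥ 2} (k-1) i_k - 1`, defined by
`P_{(1)} = X_1`, `P_{(2)} = (X_1-2)(X_1-1)`, `P_{(0,1)} = X_1-1` and, for weight `≥ 2`,
`P_{i_2,…,i_n} = Σ_{j ≥ 3, i_j ≥ 1} (i_{j-1}+1) P_{∂(i_2,…,i_{j-1}+1,i_j-1,…,i_n)}
  + [i_2 ≥ 1](X_ω - 2i_2 - … - n i_n + 2) P_{∂(i_2-1,i_3,…,i_n)}`.
Then every `P_{i_2,…,i_n}` for a dominant sequence of weight `≥ 1`, except the base case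
`P_{(1)} = X_1`, is divisible by `X_1 - 1`. -/
theorem poly_P_dvd_X_sub_one
    (P : (ℕ →₀ ℕ) → MvPolynomial ℕ ℤ)
    (hP1 : P (Finsupp.single 2 1) = X 1)
    (hP2 : P (Finsupp.single 2 2) = (X 1 - C 2) * (X 1 - C 1))
    (hP01 : P (Finsupp.single 3 1) = X 1 - C 1)
    (hPrec : ∀ i : ℕ →₀ ℕ, i 0 = 0 → i 1 = 0 →
      2 ≤ (∑ k ∈ i.support, (k - 1) * i k) - 1 →
      P i = (∑ j ∈ i.support.filter fun j => 3 ≤ j,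
              C ((i (j - 1) : ℤ) + 1)
                * P (i + Finsupp.single (j - 1) 1 - Finsupp.single j 1))
        + (if 1 ≤ i 2 then
            (X ((∑ k ∈ i.support, (k - 1) * i k) - 1)
                - C (((∑ k ∈ i.support, k * i k : ℕ) : ℤ) - 2))
              * P (i - Finsupp.single 2 1)
          else 0)) :
    ∀ i : ℕ →₀ ℕ, i 0 = 0 → i 1 = 0 →
      1 ≤ (∑ k ∈ i.support, (k - 1) * i k) - 1 → i ≠ Finsupp.single 2 1 →
      (X 1 - C 1) ∣ P i := by
  intro i h0 h1 hw _
  have hw' : 2 ≤ wgt i := by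
    have : 1 ≤ wgt i - 1 := hw
    omega
  exact aux_dvd P hP2 hP01 hPrec (wgt i) i h0 h1 rfl hw'
end

section
/- For n ≥ 5, Σ_{1 ≤ p_1 < p_2 ≤ n-1} (2p_1 + p_2 - 7)(p_1 - 1)/(p_1 p_2) = (n-1)(n-10) + (10-n) H^{(1)}_{n-1} + 7 H^{(2)}_{n-1}, where H^{(1)}_m = Σ_{1≤p≤m} 1/p and H^{(2)}_m = Σ_{1≤p<q≤m} 1/(pq). -/
open Finset

lemma gauss_icc (m : ℕ) : ∑ p ∈ Icc 1 m, (p : ℚ) = m * (m + 1) / 2 := by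
  induction m with
  | zero => simp
  | succ k ih =>
    rw [Finset.sum_Icc_succ_top (by omega)]
    push_cast
    rw [ih]; ring

lemma step_sum (k : ℕ) :
    ∑ p ∈ Icc 1 k, (2 * (p : ℚ) + ((k:ℚ)+1) - 7) * ((p : ℚ) - 1) / ((p : ℚ) * ((k:ℚ)+1))
      = ((k:ℚ) * (2*(k:ℚ) - 7) - ((k:ℚ) - 6) * (∑ p ∈ Icc 1 k, (1:ℚ)/p))
        / ((k:ℚ)+1) := by
  have h1 : ∀ p ∈ Icc 1 k,
      (2 * (p : ℚ) + ((k:ℚ)+1) - 7) * ((p : ℚ) - 1) / ((p : ℚ) * ((k:ℚ)+1))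
        = (2 * (p:ℚ) + ((k:ℚ) - 8) - ((k:ℚ) - 6) * (1/(p:ℚ))) / ((k:ℚ)+1) := by
    intro p hp
    have hp1 : 1 ≤ p := (Finset.mem_Icc.mp hp).1
    have hp0 : (p : ℚ) ≠ 0 := by
      have : (0:ℚ) < p := by exact_mod_cast hp1
      positivity
    have hk1 : ((k:ℚ)+1) ≠ 0 := by positivity
    field_simp
    ring
  rw [Finset.sum_congr rfl h1, ← Finset.sum_div]
  congr 1
  rw [Finset.sum_sub_distrib, Finset.sum_add_distrib, ← Finset.mul_sum, ← Finset.mul_sum,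
    gauss_icc, Finset.sum_const, Nat.card_Icc, Nat.add_sub_cancel, nsmul_eq_mul]
  ring

lemma aux_id (m : ℕ) :
    ∑ p1 ∈ Icc 1 m, ∑ p2 ∈ Icc (p1 + 1) m,
        (2 * (p1 : ℚ) + (p2 : ℚ) - 7) * ((p1 : ℚ) - 1) / ((p1 : ℚ) * (p2 : ℚ))
      = (m:ℚ) * ((m:ℚ) - 9) + (9 - (m:ℚ)) * (∑ p ∈ Icc 1 m, (1:ℚ)/p)
        + 7 * ∑ p ∈ Icc 1 m, ∑ q ∈ Icc (p + 1) m, (1:ℚ)/((p:ℚ)*(q:ℚ)) := by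
  induction m with
  | zero => simp
  | succ k ih =>
    have hsplit1 : ∀ p1 ∈ Icc 1 k,
        ∑ p2 ∈ Icc (p1 + 1) (k+1),
          (2 * (p1 : ℚ) + (p2 : ℚ) - 7) * ((p1 : ℚ) - 1) / ((p1 : ℚ) * (p2 : ℚ))
        = (∑ p2 ∈ Icc (p1 + 1) k,
            (2 * (p1 : ℚ) + (p2 : ℚ) - 7) * ((p1 : ℚ) - 1) / ((p1 : ℚ) * (p2 : ℚ)))
          + (2 * (p1 : ℚ) + ((k:ℚ)+1) - 7) * ((p1 : ℚ) - 1) / ((p1 : ℚ) * ((k:ℚ)+1)) := by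
      intro p1 hp1
      have h : p1 + 1 ≤ k + 1 := by
        have := (Finset.mem_Icc.mp hp1).2; omega
      rw [Finset.sum_Icc_succ_top h]
      push_cast; ring
    have hsplit2 : ∀ p ∈ Icc 1 k,
        ∑ q ∈ Icc (p + 1) (k+1), (1:ℚ)/((p:ℚ)*(q:ℚ))
        = (∑ q ∈ Icc (p + 1) k, (1:ℚ)/((p:ℚ)*(q:ℚ))) + 1/((p:ℚ)*((k:ℚ)+1)) := by
      intro p hp
      have h : p + 1 ≤ k + 1 := by
        have := (Finset.mem_Icc.mp hp).2; omega
      rw [Finset.sum_Icc_succ_top h]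
      push_cast; ring_nf
    rw [Finset.sum_Icc_succ_top (by omega : 1 ≤ k + 1),
        Finset.sum_Icc_succ_top (by omega : 1 ≤ k + 1),
        Finset.sum_Icc_succ_top (by omega : 1 ≤ k + 1),
        Finset.sum_congr rfl hsplit1, Finset.sum_congr rfl hsplit2,
        Finset.sum_add_distrib, Finset.sum_add_distrib, ih]
    have hempty : Icc (k+1+1) (k+1) = (∅ : Finset ℕ) := Finset.Icc_eq_empty (by omega)
    rw [hempty]
    simp only [Finset.sum_empty, add_zero]
    push_cast [step_sum k]
    have h1p : ∀ p ∈ Icc 1 k, (1:ℚ)/((p:ℚ)*((k:ℚ)+1)) = (1/((k:ℚ)+1)) * (1/(p:ℚ)) := by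
      intro p hp; rw [← one_div_mul_one_div, mul_comm]
    rw [Finset.sum_congr rfl h1p, ← Finset.mul_sum]
    have hk1 : ((k:ℚ)+1) ≠ 0 := by positivity
    field_simp
    ring

/-- For `n ≥ 5`,
`Σ_{1 ≤ p₁ < p₂ ≤ n-1} (2p₁+p₂-7)(p₁-1)/(p₁p₂)
  = (n-1)(n-10) + (10-n) H⁽¹⁾_{n-1} + 7 H⁽²⁾_{n-1}`,
where `H⁽¹⁾_m = Σ_{1 ≤ p ≤ m} 1/p` and `H⁽²⁾_m = Σ_{1 ≤ p < q ≤ m} 1/(pq)`. -/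
theorem double_sum_eq (n : ℕ) (hn : 5 ≤ n) :
    ∑ p1 ∈ Finset.Icc 1 (n - 1), ∑ p2 ∈ Finset.Icc (p1 + 1) (n - 1),
        (2 * (p1 : ℚ) + (p2 : ℚ) - 7) * ((p1 : ℚ) - 1) / ((p1 : ℚ) * (p2 : ℚ))
      = ((n : ℚ) - 1) * ((n : ℚ) - 10)
        + (10 - (n : ℚ)) * (∑ p ∈ Finset.Icc 1 (n - 1), (1 : ℚ) / (p : ℚ))
        + 7 * ∑ p ∈ Finset.Icc 1 (n - 1), ∑ q ∈ Finset.Icc (p + 1) (n - 1),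
            (1 : ℚ) / ((p : ℚ) * (q : ℚ)) := by
  obtain ⟨m, rfl⟩ : ∃ m, n = m + 1 := ⟨n - 1, by omega⟩
  simp only [Nat.add_sub_cancel]
  rw [aux_id m]
  push_cast
  ring
end
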